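/- arXiv:1903.10613 — 7 statements merged into one kernel-verified Lean document; each statement's English description precedes it below -/
import Mathlib

section
/- For all m, n ∈ ℕ, h_2(mn) ≥ h_2(m) + h_2(n). -/
/-- The cyclic shift operator on `𝔽₂ⁿ` (indexed by `ZMod n`): `(cshift x) i = x (i - 1)`. -/
def cshift {n : ℕ} (x : ZMod n → ZMod 2) : ZMod n → ZMod 2 := fun i => x (i - 1)

/-- A subspace `U ≤ 𝔽₂ⁿ` is cyclically covering if every vector of `𝔽₂ⁿ` has a cyclic
shift lying in `U`, i.e. `⋃ᵢ σⁱ(U) = 𝔽₂ⁿ`. -/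
def CyclicallyCovering {n : ℕ} (U : Submodule (ZMod 2) (ZMod n → ZMod 2)) : Prop :=
  ∀ x : ZMod n → ZMod 2, ∃ k : ℕ, cshift^[k] x ∈ U

/-- `h2 n` is the largest possible codimension of a cyclically covering subspace of `𝔽₂ⁿ`. -/
noncomputable def h2 (n : ℕ) : ℕ :=
  sSup {d : ℕ | ∃ U : Submodule (ZMod 2) (ZMod n → ZMod 2),
    CyclicallyCovering U ∧
    Module.finrank (ZMod 2) (ZMod n → ZMod 2) - Module.finrank (ZMod 2) U = d}

namespace CCAux

open Module

set_option linter.unusedSectionVars false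

lemma cshift_iterate {N : ℕ} (k : ℕ) (x : ZMod N → ZMod 2) (i : ZMod N) :
    cshift^[k] x i = x (i - (k : ZMod N)) := by
  induction k generalizing i with
  | zero => simp
  | succ k ih =>
    rw [Function.iterate_succ_apply']
    show (cshift^[k] x) (i - 1) = _
    rw [ih]
    congr 1
    push_cast
    ring

lemma const_one_mem {N : ℕ} {U : Submodule (ZMod 2) (ZMod N → ZMod 2)}
    (hU : CyclicallyCovering U) : (fun _ => 1 : ZMod N → ZMod 2) ∈ U := by
  obtain ⟨k, hk⟩ := hU (fun _ => 1)
  have h : cshift^[k] (fun _ => 1 : ZMod N → ZMod 2) = (fun _ => 1 : ZMod N → ZMod 2) := by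
    funext i; rw [cshift_iterate]
  rwa [h] at hk

section Construction

variable (m n : ℕ) [NeZero m] [NeZero n]

/-- reduction mod m -/
def pim : ZMod (m * n) →+* ZMod m := ZMod.castHom (dvd_mul_right m n) (ZMod m)

/-- embedding of `ZMod n` as multiples of `m` -/
def iot (j : ZMod n) : ZMod (m * n) := ((m * j.val : ℕ) : ZMod (m * n))

noncomputable def Pl : (ZMod (m * n) → ZMod 2) →ₗ[ZMod 2] (ZMod m → ZMod 2) where
  toFun x := fun r => ∑ i : ZMod (m * n), if pim m n i = r then x i else 0
  map_add' x y := by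
    funext r
    simp only [Pi.add_apply]
    rw [← Finset.sum_add_distrib]
    exact Finset.sum_congr rfl fun i _ => by split <;> simp
  map_smul' c x := by
    funext r
    simp only [Pi.smul_apply, RingHom.id_apply]
    rw [Finset.smul_sum]
    exact Finset.sum_congr rfl fun i _ => by split <;> simp

noncomputable def Rl : (ZMod (m * n) → ZMod 2) →ₗ[ZMod 2] (ZMod n → ZMod 2) :=
  LinearMap.funLeft (ZMod 2) (ZMod 2) (iot m n)

lemma Pl_apply (x : ZMod (m * n) → ZMod 2) (r : ZMod m) :
    Pl m n x r = ∑ i : ZMod (m * n), if pim m n i = r then x i else 0 := rfl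

lemma Rl_apply (x : ZMod (m * n) → ZMod 2) (j : ZMod n) :
    Rl m n x j = x (iot m n j) := rfl

lemma shift_Pl (k : ℕ) (x : ZMod (m * n) → ZMod 2) :
    Pl m n (cshift^[k] x) = cshift^[k] (Pl m n x) := by
  funext r
  rw [cshift_iterate k (Pl m n x) r, Pl_apply, Pl_apply]
  refine Fintype.sum_equiv (Equiv.subRight ((k : ZMod (m * n)))) _ _ fun i => ?_
  have hcond : (pim m n (i - (k : ZMod (m * n))) = r - (k : ZMod m)) ↔ (pim m n i = r) := by
    rw [map_sub, map_natCast, sub_left_inj]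
  simp only [Equiv.subRight_apply]
  rcases eq_or_ne (pim m n i) r with h | h
  · rw [if_pos h, if_pos (hcond.mpr h)]
    exact cshift_iterate k x i
  · rw [if_neg h, if_neg fun hc => h (hcond.mp hc)]

lemma iot_sub (j : ZMod n) (l : ℕ) :
    iot m n (j - (l : ZMod n)) = iot m n j - ((m * l : ℕ) : ZMod (m * n)) := by
  have key : ((m * (j - (l : ZMod n)).val : ℤ) : ZMod (m * n))
      = ((m * (j.val : ℤ) - m * l : ℤ) : ZMod (m * n)) := by
    rw [ZMod.intCast_eq_intCast_iff]
    have h1 : ((j - (l : ZMod n)).val : ℤ) ≡ (j.val : ℤ) - l [ZMOD (n : ℤ)] := by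
      rw [← ZMod.intCast_eq_intCast_iff]
      push_cast
      simp [ZMod.natCast_val, ZMod.intCast_cast, ZMod.cast_id]
    have h2 := h1.mul_left' (c := (m : ℤ))
    rw [mul_sub] at h2
    exact_mod_cast h2
  unfold iot
  push_cast at key ⊢
  rw [key]

lemma shift_Rl (l : ℕ) (x : ZMod (m * n) → ZMod 2) :
    Rl m n (cshift^[m * l] x) = cshift^[l] (Rl m n x) := by
  funext j
  rw [cshift_iterate l (Rl m n x) j, Rl_apply, Rl_apply, cshift_iterate, iot_sub]

lemma cshift_mul_self (l : ℕ) (w : ZMod m → ZMod 2) :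
    cshift^[m * l] w = w := by
  funext r
  rw [cshift_iterate]
  congr 1
  have h : ((m * l : ℕ) : ZMod m) = 0 := by
    push_cast
    simp
  rw [h, sub_zero]

variable (U : Submodule (ZMod 2) (ZMod m → ZMod 2))
variable (V : Submodule (ZMod 2) (ZMod n → ZMod 2))

noncomputable def Lmap : (ZMod (m * n) → ZMod 2) →ₗ[ZMod 2]
    ((ZMod m → ZMod 2) ⧸ U) × ((ZMod n → ZMod 2) ⧸ V) :=
  (U.mkQ.comp (Pl m n)).prod (V.mkQ.comp (Rl m n))

lemma mem_ker_Lmap (x : ZMod (m * n) → ZMod 2) :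
    x ∈ LinearMap.ker (Lmap m n U V) ↔ Pl m n x ∈ U ∧ Rl m n x ∈ V := by
  simp only [Lmap, LinearMap.mem_ker, LinearMap.prod_apply, LinearMap.comp_apply,
    Function.prod, Prod.mk_eq_zero, Submodule.mkQ_apply, Submodule.Quotient.mk_eq_zero]

lemma ker_covering (hU : CyclicallyCovering U) (hV : CyclicallyCovering V) :
    CyclicallyCovering (LinearMap.ker (Lmap m n U V)) := by
  intro x
  obtain ⟨k, hk⟩ := hU (Pl m n x)
  obtain ⟨l, hl⟩ := hV (Rl m n (cshift^[k] x))
  refine ⟨m * l + k, ?_⟩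
  rw [mem_ker_Lmap, Function.iterate_add_apply]
  constructor
  · rw [shift_Pl, cshift_mul_self, shift_Pl]
    exact hk
  · rw [shift_Rl]
    exact hl

lemma pim_iot (j : ZMod n) : pim m n (iot m n j) = 0 := by
  unfold pim iot
  rw [map_natCast]
  push_cast
  simp

lemma val_iot (j : ZMod n) : (iot m n j).val = m * j.val := by
  unfold iot
  exact ZMod.val_cast_of_lt
    ((mul_lt_mul_iff_right₀ (Nat.pos_of_ne_zero (NeZero.ne m))).mpr (ZMod.val_lt j))

lemma pim_val (i : ZMod (m * n)) : (pim m n i).val = i.val % m := by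
  have h : i = ((i.val : ℕ) : ZMod (m * n)) := by
    simp [ZMod.natCast_val, ZMod.cast_id]
  conv_lhs => rw [h]
  unfold pim
  rw [map_natCast, ZMod.val_natCast]

lemma pim_eq_zero_iff (i : ZMod (m * n)) : pim m n i = 0 ↔ m ∣ i.val := by
  rw [← ZMod.val_eq_zero, pim_val, Nat.dvd_iff_mod_eq_zero]

lemma Lmap_surjective (hU1 : (fun _ => 1 : ZMod m → ZMod 2) ∈ U) :
    Function.Surjective (Lmap m n U V) := by
  have hmpos : 0 < m := Nat.pos_of_ne_zero (NeZero.ne m)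
  rintro ⟨u, v⟩
  obtain ⟨a, rfl⟩ := Submodule.mkQ_surjective U u
  obtain ⟨b, rfl⟩ := Submodule.mkQ_surjective V v
  set s : ZMod 2 := ∑ j : ZMod n, b j with hs
  set a' : ZMod m → ZMod 2 := a + fun _ => (s - a 0) with ha'
  have ha'0 : a' 0 = s := by simp [ha']
  set x : ZMod (m * n) → ZMod 2 := fun i =>
    if pim m n i = 0 then b ((i.val / m : ℕ) : ZMod n)
    else if i.val < m then a' (pim m n i) else 0 with hx
  have hR : Rl m n x = b := by
    funext j
    rw [Rl_apply, hx]
    simp only [pim_iot, if_pos, val_iot]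
    rw [Nat.mul_div_cancel_left _ hmpos]
    simp [ZMod.natCast_val, ZMod.cast_id]
  have hP : Pl m n x = a' := by
    funext r
    rw [Pl_apply]
    rcases eq_or_ne r 0 with rfl | hr
    · rw [ha'0, hs, ← Finset.sum_filter]
      refine Finset.sum_nbij' (fun i => ((i.val / m : ℕ) : ZMod n)) (fun j => iot m n j)
        (fun i _ => Finset.mem_univ _) ?_ ?_ ?_ ?_
      · intro j _
        simp [Finset.mem_filter, pim_iot]
      · intro i hi
        rw [Finset.mem_filter] at hi
        have hdvd : m ∣ i.val := (pim_eq_zero_iff m n i).mp hi.2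
        have hlt : i.val / m < n := Nat.div_lt_of_lt_mul (ZMod.val_lt i)
        beta_reduce
        unfold iot
        rw [ZMod.val_natCast, Nat.mod_eq_of_lt hlt, Nat.mul_div_cancel' hdvd]
        simp [ZMod.natCast_val, ZMod.cast_id]
      · intro j _
        beta_reduce
        rw [val_iot, Nat.mul_div_cancel_left _ hmpos]
        simp [ZMod.natCast_val, ZMod.cast_id]
      · intro i hi
        rw [Finset.mem_filter] at hi
        rw [hx]
        simp only [hi.2, if_pos]
    · rw [Finset.sum_eq_single ((r.val : ℕ) : ZMod (m * n))]
      · have h1 : pim m n ((r.val : ℕ) : ZMod (m * n)) = r := by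
          unfold pim
          rw [map_natCast]
          simp [ZMod.natCast_val, ZMod.cast_id]
        have h2 : (((r.val : ℕ) : ZMod (m * n))).val = r.val :=
          ZMod.val_cast_of_lt (lt_of_lt_of_le (ZMod.val_lt r)
            (Nat.le_mul_of_pos_right m (Nat.pos_of_ne_zero (NeZero.ne n))))
        rw [if_pos h1, hx]
        simp only [h1, h2]
        rw [if_neg hr, if_pos (ZMod.val_lt r)]
      · intro i _ hi
        rcases eq_or_ne (pim m n i) r with h | h
        · rw [if_pos h, hx]
          simp only [h, if_neg hr]
          rw [if_neg]
          intro hlt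
          apply hi
          have hmod : i.val % m = r.val := by rw [← pim_val, h]
          rw [Nat.mod_eq_of_lt hlt] at hmod
          rw [← hmod]
          simp [ZMod.natCast_val, ZMod.cast_id]
        · rw [if_neg h]
      · intro h
        exact absurd (Finset.mem_univ _) h
  refine ⟨x, ?_⟩
  have hq : U.mkQ a' = U.mkQ a := by
    rw [Submodule.mkQ_apply, Submodule.mkQ_apply, Submodule.Quotient.eq]
    have h : a' - a = (s - a 0) • (fun _ => 1 : ZMod m → ZMod 2) := by
      funext t; simp [ha', smul_eq_mul]
    rw [h]
    exact U.smul_mem _ hU1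
  simp only [Lmap, LinearMap.prod_apply, LinearMap.comp_apply, hP, hR, hq, Function.prod]

end Construction

end CCAux

open Module CCAux in
/-- For all positive integers `m, n`, `h₂(mn) ≥ h₂(m) + h₂(n)`. -/
theorem h2_mul_ge_add (m n : ℕ) (hm : 0 < m) (hn : 0 < n) :
    h2 m + h2 n ≤ h2 (m * n) := by
  haveI : NeZero m := ⟨hm.ne'⟩
  haveI : NeZero n := ⟨hn.ne'⟩
  have hbdd : ∀ k : ℕ, BddAbove {d : ℕ | ∃ U : Submodule (ZMod 2) (ZMod k → ZMod 2),
      CyclicallyCovering U ∧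
      finrank (ZMod 2) (ZMod k → ZMod 2) - finrank (ZMod 2) U = d} := by
    intro k
    refine ⟨finrank (ZMod 2) (ZMod k → ZMod 2), ?_⟩
    rintro d ⟨U, -, rfl⟩
    exact Nat.sub_le _ _
  have hne : ∀ k : ℕ, ({d : ℕ | ∃ U : Submodule (ZMod 2) (ZMod k → ZMod 2),
      CyclicallyCovering U ∧
      finrank (ZMod 2) (ZMod k → ZMod 2) - finrank (ZMod 2) U = d}).Nonempty := by
    intro k
    exact ⟨_, ⊤, fun x => ⟨0, Submodule.mem_top⟩, rfl⟩
  obtain ⟨U, hU, hdU⟩ := Nat.sSup_mem (hne m) (hbdd m)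
  obtain ⟨V, hV, hdV⟩ := Nat.sSup_mem (hne n) (hbdd n)
  set W := LinearMap.ker (Lmap m n U V) with hW
  have hWcov : CyclicallyCovering W := ker_covering m n U V hU hV
  have hWmem : finrank (ZMod 2) (ZMod (m * n) → ZMod 2) - finrank (ZMod 2) W ∈
      {d : ℕ | ∃ U : Submodule (ZMod 2) (ZMod (m * n) → ZMod 2),
        CyclicallyCovering U ∧
        finrank (ZMod 2) (ZMod (m * n) → ZMod 2) - finrank (ZMod 2) U = d} :=
    ⟨W, hWcov, rfl⟩
  have hle : finrank (ZMod 2) (ZMod (m * n) → ZMod 2) - finrank (ZMod 2) W ≤ h2 (m * n) :=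
    le_csSup (hbdd (m * n)) hWmem
  refine le_trans ?_ hle
  -- rank computations
  have hsurj := Lmap_surjective m n U V (const_one_mem hU)
  have hrange : LinearMap.range (Lmap m n U V) = ⊤ := LinearMap.range_eq_top.mpr hsurj
  have h1 := LinearMap.finrank_range_add_finrank_ker (Lmap m n U V)
  rw [hrange, finrank_top, finrank_prod] at h1
  have hqU := Submodule.finrank_quotient_add_finrank U
  have hqV := Submodule.finrank_quotient_add_finrank V
  have em : finrank (ZMod 2) (ZMod m → ZMod 2) = m := by
    simp [Module.finrank_pi, ZMod.card]
  have en : finrank (ZMod 2) (ZMod n → ZMod 2) = n := by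
    simp [Module.finrank_pi, ZMod.card]
  have hdU' : finrank (ZMod 2) (ZMod m → ZMod 2) - finrank (ZMod 2) U = h2 m := hdU
  have hdV' : finrank (ZMod 2) (ZMod n → ZMod 2) - finrank (ZMod 2) V = h2 n := hdV
  rw [em] at hqU hdU'
  rw [en] at hqV hdV'
  rw [← hW] at h1
  omega
end

section
/- For all n ∈ ℕ, h_2(2n) ≤ 2·h_2(n). -/
set_option linter.unusedSectionVars false

section maps
variable (n : ℕ)

/-- cast from `ZMod (2n)` to `ZMod n`. -/
def cst : ZMod (2*n) →+* ZMod n := ZMod.castHom (dvd_mul_left n 2) (ZMod n)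

/-- lift `ZMod n` to `ZMod (2n)` via `val`. -/
def lft (i : ZMod n) : ZMod (2*n) := ((i.val : ℕ) : ZMod (2*n))

def phiL : (ZMod n → ZMod 2) →ₗ[ZMod 2] (ZMod (2*n) → ZMod 2) where
  toFun y := fun j => y (cst n j)
  map_add' _ _ := rfl
  map_smul' _ _ := rfl

def psiL : (ZMod (2*n) → ZMod 2) →ₗ[ZMod 2] (ZMod n → ZMod 2) where
  toFun x := fun i => x (lft n i) + x (lft n i + (n : ZMod (2*n)))
  map_add' x y := by funext i; simp [Pi.add_apply]; ring
  map_smul' c x := by funext i; simp [Pi.smul_apply, smul_eq_mul]; ring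

@[simp] lemma phiL_apply (y : ZMod n → ZMod 2) (j : ZMod (2*n)) :
    phiL n y j = y (cst n j) := rfl

@[simp] lemma psiL_apply (x : ZMod (2*n) → ZMod 2) (i : ZMod n) :
    psiL n x i = x (lft n i) + x (lft n i + (n : ZMod (2*n))) := rfl

variable [NeZero n]

lemma cast_lft (i : ZMod n) : cst n (lft n i) = i := by
  rw [lft, map_natCast]
  exact ZMod.natCast_rightInverse i

lemma nn_zero : (n : ZMod (2*n)) + (n : ZMod (2*n)) = 0 := by
  rw [← Nat.cast_add, ← two_mul, ZMod.natCast_self]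

instance : NeZero (2*n) := ⟨by have := NeZero.ne n; omega⟩

lemma fiber (j : ZMod (2*n)) : j = lft n (cst n j) ∨ j = lft n (cst n j) + (n : ZMod (2*n)) := by
  have h0 : ((j.val : ℕ) : ZMod (2*n)) = j := ZMod.natCast_rightInverse j
  have hjv : j.val < 2*n := ZMod.val_lt j
  have hc : cst n j = ((j.val : ℕ) : ZMod n) := by
    conv_lhs => rw [← h0]
    rw [map_natCast]
  have hv : (cst n j).val = j.val % n := by rw [hc, ZMod.val_natCast]
  rcases lt_or_ge j.val n with h | h
  · left
    rw [lft, hv, Nat.mod_eq_of_lt h, h0]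
  · right
    have hmod : j.val % n = j.val - n := by
      rw [Nat.mod_eq_sub_mod h, Nat.mod_eq_of_lt (by omega)]
    rw [lft, hv, hmod, ← Nat.cast_add]
    rw [show j.val - n + n = j.val by omega, h0]

lemma psi_phi (y : ZMod n → ZMod 2) : psiL n (phiL n y) = 0 := by
  funext i
  have h1 : cst n (lft n i + (n : ZMod (2*n))) = i := by
    rw [map_add, cast_lft, map_natCast, ZMod.natCast_self, add_zero]
  simp [cast_lft, h1, CharTwo.add_self_eq_zero]

lemma phi_inj : Function.Injective (phiL n) := by
  intro y1 y2 h
  funext i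
  have := congrFun h (lft n i)
  simpa [cast_lft] using this

lemma phi_shift (y : ZMod n → ZMod 2) : cshift (phiL n y) = phiL n (cshift y) := by
  funext j
  show phiL n y (j - 1) = cshift y (cst n j)
  simp [cshift, map_sub, map_one]

lemma phi_shift_iter (k : ℕ) (y : ZMod n → ZMod 2) :
    cshift^[k] (phiL n y) = phiL n (cshift^[k] y) := by
  induction k with
  | zero => rfl
  | succ k ih =>
      rw [Function.iterate_succ_apply', Function.iterate_succ_apply', ih, phi_shift]

lemma psi_shift (x : ZMod (2*n) → ZMod 2) : cshift (psiL n x) = psiL n (cshift x) := by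
  funext i
  show psiL n x (i - 1) = cshift x (lft n i) + cshift x (lft n i + (n : ZMod (2*n)))
  simp only [psiL_apply, cshift]
  have hc : cst n (lft n i - 1) = i - 1 := by rw [map_sub, map_one, cast_lft]
  have hj := fiber n (lft n i - 1)
  rw [hc] at hj
  have harr : lft n i + (n : ZMod (2*n)) - 1 = (lft n i - 1) + (n : ZMod (2*n)) := by ring
  rcases hj with h | h
  · rw [harr, h]
  · rw [harr, h, add_assoc, nn_zero, add_zero, add_comm]

lemma psi_shift_iter (k : ℕ) (x : ZMod (2*n) → ZMod 2) :
    cshift^[k] (psiL n x) = psiL n (cshift^[k] x) := by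
  induction k with
  | zero => rfl
  | succ k ih =>
      rw [Function.iterate_succ_apply', Function.iterate_succ_apply', ih, psi_shift]

/-- a right inverse for ψ -/
def lift0 (y : ZMod n → ZMod 2) : ZMod (2*n) → ZMod 2 :=
  fun j => if j.val < n then y (cst n j) else 0

lemma psi_lift0 (y : ZMod n → ZMod 2) : psiL n (lift0 n y) = y := by
  funext i
  have hiv : i.val < n := ZMod.val_lt i
  have hv1 : (lft n i).val = i.val := ZMod.val_cast_of_lt (by omega)
  have he2 : lft n i + (n : ZMod (2*n)) = ((i.val + n : ℕ) : ZMod (2*n)) := by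
    rw [lft, Nat.cast_add]
  have hv2 : (lft n i + (n : ZMod (2*n))).val = i.val + n := by
    rw [he2]; exact ZMod.val_cast_of_lt (by omega)
  simp only [psiL_apply, lift0, hv1, hv2, if_pos hiv, if_neg (by omega : ¬ (i.val + n < n))]
  rw [cast_lft, add_zero]

end maps

/-- For all `n ∈ ℕ`, `h₂(2n) ≤ 2·h₂(n)`. -/
theorem h2_two_mul_le (n : ℕ) :
    h2 (2 * n) ≤ 2 * h2 n := by
  rcases Nat.eq_zero_or_pos n with rfl | hn
  · rw [mul_zero]
    exact Nat.le_mul_of_pos_left _ (by norm_num)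
  haveI : NeZero n := ⟨hn.ne'⟩
  apply csSup_le'
  rintro d ⟨U, hU, rfl⟩
  set V : Submodule (ZMod 2) (ZMod n → ZMod 2) := U.comap (phiL n) with hVdef
  set W : Submodule (ZMod 2) (ZMod n → ZMod 2) := U.map (psiL n) with hWdef
  have hV : CyclicallyCovering V := by
    intro y
    obtain ⟨k, hk⟩ := hU (phiL n y)
    refine ⟨k, ?_⟩
    rw [hVdef, Submodule.mem_comap, ← phi_shift_iter]
    exact hk
  have hW : CyclicallyCovering W := by
    intro y
    obtain ⟨k, hk⟩ := hU (lift0 n y)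
    refine ⟨k, Submodule.mem_map.mpr ⟨cshift^[k] (lift0 n y), hk, ?_⟩⟩
    rw [← psi_shift_iter, psi_lift0]
  have hbdd : BddAbove {d : ℕ | ∃ U : Submodule (ZMod 2) (ZMod n → ZMod 2),
      CyclicallyCovering U ∧
      Module.finrank (ZMod 2) (ZMod n → ZMod 2) - Module.finrank (ZMod 2) U = d} :=
    ⟨Module.finrank (ZMod 2) (ZMod n → ZMod 2), by rintro d ⟨U', _, rfl⟩; exact Nat.sub_le _ _⟩
  have hVle : Module.finrank (ZMod 2) (ZMod n → ZMod 2) - Module.finrank (ZMod 2) V ≤ h2 n :=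
    le_csSup hbdd ⟨V, hV, rfl⟩
  have hWle : Module.finrank (ZMod 2) (ZMod n → ZMod 2) - Module.finrank (ZMod 2) W ≤ h2 n :=
    le_csSup hbdd ⟨W, hW, rfl⟩
  -- rank counting
  set f : U →ₗ[ZMod 2] (ZMod n → ZMod 2) := (psiL n).comp U.subtype with hfdef
  have hrange : LinearMap.range f = W := by
    rw [hfdef, LinearMap.range_comp, Submodule.range_subtype]
  have hrn : Module.finrank (ZMod 2) (LinearMap.range f) +
      Module.finrank (ZMod 2) (LinearMap.ker f) = Module.finrank (ZMod 2) U :=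
    LinearMap.finrank_range_add_finrank_ker f
  -- the injection V → ker f
  have hkerV : Module.finrank (ZMod 2) V ≤ Module.finrank (ZMod 2) (LinearMap.ker f) := by
    have hmem1 : ∀ v : V, phiL n (v : ZMod n → ZMod 2) ∈ U := fun v => v.2
    set g1 : V →ₗ[ZMod 2] U :=
      LinearMap.codRestrict U ((phiL n).comp V.subtype) hmem1 with hg1def
    have hmem2 : ∀ v : V, g1 v ∈ LinearMap.ker f := by
      intro v
      rw [LinearMap.mem_ker]
      show psiL n (phiL n (v : ZMod n → ZMod 2)) = 0
      exact psi_phi n _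
    set g2 : V →ₗ[ZMod 2] (LinearMap.ker f) := LinearMap.codRestrict _ g1 hmem2 with hg2def
    have hinj : Function.Injective g2 := by
      intro a b hab
      have h1 : phiL n (a : ZMod n → ZMod 2) = phiL n (b : ZMod n → ZMod 2) := by
        exact congrArg (fun z : LinearMap.ker f => ((z : U) : ZMod (2*n) → ZMod 2)) hab
      exact Subtype.ext (phi_inj n h1)
    exact LinearMap.finrank_le_finrank_of_injective (f := g2) hinj
  have hWrank : Module.finrank (ZMod 2) (LinearMap.range f) = Module.finrank (ZMod 2) W := by
    rw [hrange]
  have hTn : Module.finrank (ZMod 2) (ZMod n → ZMod 2) = n := by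
    rw [Module.finrank_pi, ZMod.card]
  have hT2n : Module.finrank (ZMod 2) (ZMod (2*n) → ZMod 2) = 2*n := by
    rw [Module.finrank_pi, ZMod.card]
  have hVb : Module.finrank (ZMod 2) V ≤ Module.finrank (ZMod 2) (ZMod n → ZMod 2) :=
    Submodule.finrank_le V
  have hWb : Module.finrank (ZMod 2) W ≤ Module.finrank (ZMod 2) (ZMod n → ZMod 2) :=
    Submodule.finrank_le W
  omega
end

section
/- For every i ∈ ℕ, h_2(2^i) = 0; in other words, the only cyclically covering subspace of 𝔽_2^{2^i} is 𝔽_2^{2^i} itself. -/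
open AddMonoidAlgebra Finsupp Finset

lemma zmod2_ne_zero {z : ZMod 2} (h : z ≠ 0) : z = 1 := by revert h; revert z; decide

lemma charP_A (n : ℕ) : CharP (AddMonoidAlgebra (ZMod 2) (ZMod n)) 2 :=
  charP_of_injective_algebraMap
    (R := ZMod 2) (fun x y h => by
      have := congrArg (fun f : AddMonoidAlgebra (ZMod 2) (ZMod n) => f.coeff 0) h
      simpa [AddMonoidAlgebra.coe_algebraMap] using this) 2

/-- multiplication formula on full sum -/
lemma mul_apply_full (n : ℕ) [NeZero n] (ab y : AddMonoidAlgebra (ZMod 2) (ZMod n)) (k : ZMod n) :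
    (ab * y).coeff k = ∑ t : ZMod n, ab.coeff t * y.coeff (k - t) := by
  have h : ab = ∑ t : ZMod n, AddMonoidAlgebra.single t (ab.coeff t) := by
    ext s
    rw [AddMonoidAlgebra.coeff_sum, Finsupp.finset_sum_apply]
    simp [Finsupp.single_apply]
  conv_lhs => rw [h, Finset.sum_mul, AddMonoidAlgebra.coeff_sum, Finsupp.finset_sum_apply]
  refine Finset.sum_congr rfl fun t _ => ?_
  rw [AddMonoidAlgebra.coeff_single_mul_apply, neg_add_eq_sub]

lemma key' (n : ℕ) [NeZero n]
    (hεn : ((1 : AddMonoidAlgebra (ZMod 2) (ZMod n)) + AddMonoidAlgebra.single 1 1) ^ n = 0)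
    (a : ZMod n → ZMod 2) (ha : a ≠ 0) :
    ∃ x : ZMod n → ZMod 2, ∀ k : ZMod n, ∑ t : ZMod n, x (t - k) * a t = 1 := by
  classical
  haveI := charP_A n
  set A := AddMonoidAlgebra (ZMod 2) (ZMod n) with hA
  set g : A := AddMonoidAlgebra.single (1 : ZMod n) (1 : ZMod 2) with hg
  set ε : A := 1 + g with hε
  set ab : A := AddMonoidAlgebra.ofCoeff (Finsupp.equivFunOnFinite.symm a) with hab
  have habt : ∀ t, ab.coeff t = a t := fun t => rfl
  have hab0 : ab ≠ 0 := by
    intro h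
    apply ha
    funext t
    rw [← habt t, h]; rfl
  have hex : ∃ m, ab * ε ^ m = 0 := ⟨n, by rw [hεn, mul_zero]⟩
  set N := Nat.find hex with hN
  have hN0 : N ≠ 0 := by
    intro h
    have := Nat.find_spec hex
    rw [← hN, h] at this
    simp only [pow_zero, mul_one] at this
    exact hab0 this
  set b : A := ab * ε ^ (N - 1) with hb
  have hbne : b ≠ 0 := Nat.find_min hex (Nat.sub_lt (Nat.pos_of_ne_zero hN0) one_pos)
  have hbε : b * ε = 0 := by
    rw [hb, mul_assoc, ← pow_succ, Nat.sub_add_cancel (Nat.one_le_iff_ne_zero.mpr hN0)]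
    exact Nat.find_spec hex
  have hbg : b = b * g := by
    have h1 : b * 1 + b * g = 0 := by rw [← mul_add, ← hε]; exact hbε
    rw [mul_one] at h1
    linear_combination -h1 + CharP.cast_eq_zero A 2 * b
  have hshift : ∀ k : ZMod n, b.coeff k = b.coeff (k - 1) := by
    intro k
    conv_lhs => rw [hbg]
    rw [hg, show (b * AddMonoidAlgebra.single (1 : ZMod n) (1 : ZMod 2)).coeff k = b.coeff (k - 1) * 1 from
      by rw [sub_eq_add_neg]; exact AddMonoidAlgebra.coeff_mul_single_apply b 1 1 k, mul_one]
  have hconst : ∀ k : ZMod n, b.coeff k = b.coeff 0 := by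
    have hnat : ∀ j : ℕ, b.coeff ((j : ZMod n)) = b.coeff 0 := by
      intro j
      induction j with
      | zero => norm_num
      | succ m ih =>
        rw [show ((m+1 : ℕ) : ZMod n) = (m : ZMod n) + 1 by push_cast; ring]
        rw [hshift ((m : ZMod n) + 1)]
        simpa using ih
    intro k
    have hk : ((k.val : ZMod n)) = k := by simp [ZMod.natCast_val, ZMod.cast_id]
    rw [← hk]; exact hnat k.val
  have hb1 : ∀ k : ZMod n, b.coeff k = 1 := by
    have h0 : b.coeff 0 ≠ 0 := by
      intro h
      apply hbne
      ext k
      rw [hconst k, h]; rfl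
    intro k
    rw [hconst k]
    exact zmod2_ne_zero h0
  refine ⟨fun t => (ε ^ (N-1)).coeff (-t), fun k => ?_⟩
  have hm := mul_apply_full n ab (ε ^ (N-1)) k
  rw [← hb, hb1 k] at hm
  refine Eq.trans ?_ hm.symm
  refine Finset.sum_congr rfl fun t _ => ?_
  rw [mul_comm, habt t]
  congr 2
  ring_nf

lemma key (i : ℕ) (a : ZMod (2^i) → ZMod 2) (ha : a ≠ 0) :
    ∃ x : ZMod (2^i) → ZMod 2, ∀ k : ZMod (2^i), ∑ t : ZMod (2^i), x (t - k) * a t = 1 := by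
  haveI : NeZero (2^i) := ⟨pow_ne_zero i (by norm_num)⟩
  haveI := charP_A (2^i)
  haveI : Fact (Nat.Prime 2) := ⟨Nat.prime_two⟩
  refine key' (2^i) ?_ a ha
  have hfrob := add_pow_char_pow (R := AddMonoidAlgebra (ZMod 2) (ZMod (2^i)))
    (1 : AddMonoidAlgebra (ZMod 2) (ZMod (2^i))) (AddMonoidAlgebra.single 1 1) 2 i
  rw [hfrob, one_pow, AddMonoidAlgebra.single_pow]
  have h1 : ((2^i) • (1 : ZMod (2^i))) = 0 := by
    simp [nsmul_eq_mul, ZMod.natCast_self]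
  rw [h1, one_pow]
  have : (AddMonoidAlgebra.single (0 : ZMod (2^i)) (1 : ZMod 2)) =
      (1 : AddMonoidAlgebra (ZMod 2) (ZMod (2^i))) := rfl
  rw [this]
  have h2 := CharP.cast_eq_zero (AddMonoidAlgebra (ZMod 2) (ZMod (2^i))) 2
  linear_combination h2


/-- For every `i ∈ ℕ`, `h₂(2ⁱ) = 0`; in other words, the only cyclically covering subspace
of `𝔽₂^(2ⁱ)` is the whole space. -/
theorem h2_pow_two_eq_zero (i : ℕ) :
    h2 (2 ^ i) = 0 ∧
      ∀ U : Submodule (ZMod 2) (ZMod (2 ^ i) → ZMod 2), CyclicallyCovering U → U = ⊤ := by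
  have hiter : ∀ (k : ℕ) (x : ZMod (2^i) → ZMod 2) (t : ZMod (2^i)),
      cshift^[k] x t = x (t - (k : ZMod (2^i))) := by
    intro k
    induction k with
    | zero => intro x t; simp
    | succ m ih =>
      intro x t
      rw [Function.iterate_succ_apply, ih (cshift x) t]
      show x (t - (m : ZMod (2^i)) - 1) = _
      push_cast
      ring_nf
  have hU : ∀ U : Submodule (ZMod 2) (ZMod (2 ^ i) → ZMod 2), CyclicallyCovering U → U = ⊤ := by
    intro U hcov
    by_contra hne
    obtain ⟨f, hf0, hfbot⟩ := Submodule.exists_dual_map_eq_bot_of_lt_top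
      (lt_top_iff_ne_top.mpr hne) inferInstance
    have hfU : ∀ u ∈ U, f u = 0 := by
      intro u hu
      have hmem : f u ∈ U.map f := ⟨u, hu, rfl⟩
      rw [hfbot] at hmem
      simpa using hmem
    set a : ZMod (2^i) → ZMod 2 := fun s => f (fun j => if s = j then 1 else 0) with ha
    have ha0 : a ≠ 0 := by
      intro h
      apply hf0
      refine LinearMap.ext fun x => ?_
      rw [LinearMap.pi_apply_eq_sum_univ f x]
      have : ∀ s : ZMod (2^i), f (fun j => if s = j then 1 else 0) = 0 := by
        intro s
        have := congrFun h s
        simpa [ha] using this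
      simp [this]
    obtain ⟨x, hx⟩ := key i a ha0
    obtain ⟨k, hk⟩ := hcov x
    have h1 : f (cshift^[k] x) = 0 := hfU _ hk
    have h2 : f (cshift^[k] x) = 1 := by
      rw [LinearMap.pi_apply_eq_sum_univ f (cshift^[k] x)]
      refine Eq.trans ?_ (hx ((k : ZMod (2^i))))
      refine Finset.sum_congr rfl fun t _ => ?_
      rw [hiter k x t, smul_eq_mul]
    rw [h1] at h2
    exact zero_ne_one h2
  refine ⟨?_, hU⟩
  have hset : {d : ℕ | ∃ U : Submodule (ZMod 2) (ZMod (2^i) → ZMod 2),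
      CyclicallyCovering U ∧
      Module.finrank (ZMod 2) (ZMod (2^i) → ZMod 2) - Module.finrank (ZMod 2) U = d} = {0} := by
    ext d
    simp only [Set.mem_setOf_eq, Set.mem_singleton_iff]
    constructor
    · rintro ⟨U, hc, hd⟩
      rw [hU U hc, finrank_top] at hd
      omega
    · rintro rfl
      exact ⟨⊤, fun x => ⟨0, Submodule.mem_top⟩, by rw [finrank_top]; omega⟩
  unfold h2
  rw [hset, csSup_singleton]
end

section
/- Let n be an odd positive integer. A vector v ∈ 𝔽_2^n works if and only if the sum of its coordinates over 𝔽_2 equals 0. -/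
/-- The standard dot product over `𝔽₂`. -/
def dot {n : ℕ} [NeZero n] (v x : ZMod n → ZMod 2) : ZMod 2 := ∑ i, v i * x i

/-- A vector `v ∈ 𝔽₂ⁿ` works if for every `x` some cyclic shift of `x` is orthogonal to `v`. -/
def Works {n : ℕ} [NeZero n] (v : ZMod n → ZMod 2) : Prop :=
  ∀ x : ZMod n → ZMod 2, ∃ k : ℕ, dot v (cshift^[k] x) = 0

lemma cshift_iterate {n : ℕ} (x : ZMod n → ZMod 2) (k : ℕ) (i : ZMod n) :
    (cshift^[k] x) i = x (i - (k : ZMod n)) := by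
  induction k generalizing i with
  | zero => simp
  | succ m ih =>
    rw [Function.iterate_succ_apply']
    show (cshift^[m] x) (i - 1) = _
    rw [ih]
    congr 1
    push_cast
    ring

/-- For `n` odd, a vector `v ∈ 𝔽₂ⁿ` works iff the sum of its coordinates over `𝔽₂` is `0`. -/
theorem works_iff_sum_eq_zero (n : ℕ) [NeZero n] (hn : Odd n) (v : ZMod n → ZMod 2) :
    Works v ↔ ∑ i, v i = 0 := by
  constructor
  · intro hw
    by_contra h
    have h1 : ∑ i, v i = 1 := by
      have : ∀ a : ZMod 2, a ≠ 0 → a = 1 := by decide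
      exact this _ h
    obtain ⟨k, hk⟩ := hw (fun _ => 1)
    have : dot v (cshift^[k] fun _ => 1) = 1 := by
      unfold dot
      simp only [cshift_iterate, mul_one]
      exact h1
    rw [hk] at this
    exact zero_ne_one this
  · intro hs x
    by_contra hc
    push_neg at hc
    have h1 : ∀ k : ℕ, dot v (cshift^[k] x) = 1 := by
      intro k
      have : ∀ a : ZMod 2, a ≠ 0 → a = 1 := by decide
      exact this _ (hc k)
    have key : ∑ j : ZMod n, dot v (cshift^[j.val] x) = (∑ i, v i) * (∑ i, x i) := by
      have hval : ∀ j : ZMod n, ((j.val : ℕ) : ZMod n) = j := fun j => ZMod.natCast_rightInverse j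
      calc ∑ j : ZMod n, dot v (cshift^[j.val] x)
          = ∑ j : ZMod n, ∑ i, v i * x (i - j) := by
            apply Finset.sum_congr rfl
            intro j _
            unfold dot
            simp only [cshift_iterate, hval]
        _ = ∑ i, ∑ j : ZMod n, v i * x (i - j) := Finset.sum_comm
        _ = ∑ i, v i * ∑ j : ZMod n, x (i - j) := by
            simp [Finset.mul_sum]
        _ = ∑ i, v i * ∑ j : ZMod n, x j := by
            apply Finset.sum_congr rfl
            intro i _
            congr 1
            exact Fintype.sum_equiv (Equiv.subLeft i) _ _ (fun j => rfl)
        _ = (∑ i, v i) * (∑ i, x i) := by rw [Finset.sum_mul]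
    rw [hs, zero_mul] at key
    have : ∑ j : ZMod n, dot v (cshift^[j.val] x) = 1 := by
      simp only [h1]
      rw [Finset.sum_const, Finset.card_univ, ZMod.card, nsmul_eq_mul, mul_one]
      rw [show ((n : ℕ) : ZMod 2) = ((n % 2 : ℕ) : ZMod 2) from (ZMod.natCast_mod n 2).symm,
        Nat.odd_iff.mp hn]
      simp
    rw [key] at this
    exact zero_ne_one this
end

section
/- Let n be an odd positive integer and let v ∈ 𝔽_2^n with v_0 = 0, with coordinates indexed by ℤ/nℤ. Then v and ê work together if and only if there is no subset S ⊆ ℤ/nℤ of odd cardinality such that for every i ∈ S the number of elements j ∈ S with v_{j−i} = 1 is odd. -/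
/-- Two vectors `v, w ∈ 𝔽₂ⁿ` work together if for every `x` there is a single cyclic shift
of `x` orthogonal to both. -/
def WorkTogether2 {n : ℕ} [NeZero n] (v w : ZMod n → ZMod 2) : Prop :=
  ∀ x : ZMod n → ZMod 2, ∃ k : ℕ,
    dot v (cshift^[k] x) = 0 ∧ dot w (cshift^[k] x) = 0

/-- The vector `ê ∈ 𝔽₂ⁿ` with `ê 0 = 0` and `ê i = 1` for `i ≠ 0`. -/
def ehat (n : ℕ) : ZMod n → ZMod 2 := fun i => if i = 0 then 0 else 1

lemma zmod2_cases (a : ZMod 2) : a = 0 ∨ a = 1 := by fin_cases a <;> [exact Or.inl rfl; exact Or.inr rfl]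

lemma cast_odd_iff (m : ℕ) : (m : ZMod 2) = 1 ↔ Odd m := by
  rw [Nat.odd_iff, ← ZMod.natCast_mod m 2]
  rcases Nat.mod_two_eq_zero_or_one m with h | h <;> simp [h]

lemma dot_shift {n : ℕ} [NeZero n] (v x : ZMod n → ZMod 2) (k : ℕ) :
    dot v (cshift^[k] x) = ∑ j, v (j + (k : ZMod n)) * x j := by
  unfold dot
  refine (Fintype.sum_equiv (Equiv.addRight (k : ZMod n)) _ _ ?_).symm
  intro j
  simp [cshift_iterate]

lemma sum_shift {n : ℕ} [NeZero n] (x : ZMod n → ZMod 2) (k : ℕ) :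
    ∑ i, (cshift^[k] x) i = ∑ i, x i := by
  simp only [cshift_iterate]
  exact Fintype.sum_equiv (Equiv.subRight (k : ZMod n)) _ _ (fun i => rfl)

lemma dot_ehat {n : ℕ} [NeZero n] (y : ZMod n → ZMod 2) :
    dot (ehat n) y + y 0 = ∑ i, y i := by
  have h1 : dot (ehat n) y = ∑ i ∈ Finset.univ.erase (0 : ZMod n), y i := by
    rw [← Finset.filter_ne', Finset.sum_filter]
    unfold dot ehat
    apply Finset.sum_congr rfl
    intro i _
    by_cases h : i = 0 <;> simp [h]
  rw [h1, Finset.sum_erase_add Finset.univ y (Finset.mem_univ 0)]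

lemma card_filter_cast {n : ℕ} (S : Finset (ZMod n)) (f : ZMod n → ZMod 2) :
    (((S.filter (fun j => f j = 1)).card : ℕ) : ZMod 2) = ∑ j ∈ S, f j := by
  rw [← Finset.sum_boole]
  apply Finset.sum_congr rfl
  intro j _
  rcases zmod2_cases (f j) with h | h <;> simp [h]

lemma sum_mul_eq {n : ℕ} [NeZero n] (x g : ZMod n → ZMod 2) :
    ∑ j, g j * x j = ∑ j ∈ Finset.univ.filter (fun j => x j = 1), g j := by
  rw [Finset.sum_filter]
  apply Finset.sum_congr rfl
  intro j _
  rcases zmod2_cases (x j) with h | h <;> simp [h]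

lemma sum_eq_card {n : ℕ} [NeZero n] (x : ZMod n → ZMod 2) :
    ∑ j, x j = (((Finset.univ.filter (fun j => x j = 1)).card : ℕ) : ZMod 2) := by
  calc ∑ j, x j = ∑ j, (1 : ZMod 2) * x j := by simp
  _ = ∑ j ∈ Finset.univ.filter (fun j => x j = 1), 1 := sum_mul_eq x 1
  _ = _ := by simp

lemma sum_sub_reindex {n : ℕ} [NeZero n] (v : ZMod n → ZMod 2) (i : ZMod n) :
    ∑ j, v (j - i) = ∑ j, v j :=
  Fintype.sum_equiv (Equiv.subRight i) _ _ (fun j => rfl)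
/-- Let `n` be odd and `v ∈ 𝔽₂ⁿ` with `v 0 = 0` (coordinates indexed by `ℤ/nℤ`). Then `v`
and `ê` work together iff there is no subset `S ⊆ ℤ/nℤ` of odd cardinality such that for
every `i ∈ S` the number of `j ∈ S` with `v (j - i) = 1` (the outdegree of `i` in the
subgraph of the Cayley digraph `G_v` induced on `S`) is odd. -/
theorem workTogether_ehat_iff_no_bad_subgraph (n : ℕ) [NeZero n] (hn : Odd n)
    (v : ZMod n → ZMod 2) (h0 : v 0 = 0) :
    WorkTogether2 v (ehat n) ↔
      ¬ ∃ S : Finset (ZMod n), Odd S.card ∧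
          ∀ i ∈ S, Odd (S.filter (fun j => v (j - i) = 1)).card := by
  constructor
  · -- works together → no bad subset
    rintro h ⟨S, hSodd, hbad⟩
    set x : ZMod n → ZMod 2 := fun j => if j ∈ S then 1 else 0 with hxdef
    have hfilt : Finset.univ.filter (fun j => x j = 1) = S := by
      ext j
      by_cases hj : j ∈ S <;> simp [hxdef, hj]
    have hsumx : ∑ j, x j = 1 := by
      rw [sum_eq_card, hfilt, cast_odd_iff]
      exact hSodd
    obtain ⟨k, hv, he⟩ := h x
    -- from the ehat condition, -k ∈ S
    have hd := dot_ehat (cshift^[k] x)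
    rw [sum_shift, he, zero_add, cshift_iterate, hsumx] at hd
    have hiS : -(k : ZMod n) ∈ S := by
      by_contra hc
      rw [zero_sub] at hd
      simp [hxdef, hc] at hd
    set i : ZMod n := -(k : ZMod n) with hidef
    -- from the v condition, the outdegree of i in S is even
    rw [dot_shift] at hv
    have hrw : ∀ j : ZMod n, v (j + (k : ZMod n)) * x j = v (j - i) * x j := by
      intro j
      rw [hidef, sub_neg_eq_add]
    rw [Fintype.sum_congr _ _ hrw, sum_mul_eq, hfilt, ← card_filter_cast] at hv
    have := (cast_odd_iff _).mpr (hbad i hiS)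
    rw [hv] at this
    exact zero_ne_one this
  · -- no bad subset → works together
    intro hno x
    -- first, total weight of v is even
    have hW : ∑ j, v j = 0 := by
      rcases zmod2_cases (∑ j, v j) with h | h
      · exact h
      · exfalso
        apply hno
        refine ⟨Finset.univ, ?_, fun i _ => ?_⟩
        · rw [Finset.card_univ, ZMod.card]
          exact hn
        · rw [← cast_odd_iff, card_filter_cast, sum_sub_reindex, h]
    set S : Finset (ZMod n) := Finset.univ.filter (fun j => x j = 1) with hSdef
    have hsumx : ∑ j, x j = ((S.card : ℕ) : ZMod 2) := by
      rw [sum_eq_card]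
    rcases zmod2_cases ((S.card : ℕ) : ZMod 2) with hc | hc
    · -- |S| even: find i ∉ S with even outdegree into S
      have hex : ∃ i, i ∉ S ∧ ∑ j ∈ S, v (j - i) = 0 := by
        by_contra hcon
        push_neg at hcon
        apply hno
        have hSeven : Even S.card := by
          rw [Nat.not_odd_iff_even.symm, ← cast_odd_iff, hc]
          simp
        refine ⟨Sᶜ, ?_, fun i hi => ?_⟩
        · rw [Finset.card_compl, ZMod.card]
          exact Nat.Odd.sub_even (le_trans (Finset.card_le_univ S) (le_of_eq (ZMod.card n))) hn hSeven
        · have hiS : i ∉ S := Finset.mem_compl.mp hi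
          have h1 : ∑ j ∈ S, v (j - i) = 1 :=
            (zmod2_cases _).resolve_left (hcon i hiS)
          have h2 := Finset.sum_add_sum_compl S (fun j => v (j - i))
          rw [h1, sum_sub_reindex, hW] at h2
          rw [← cast_odd_iff, card_filter_cast]
          rcases zmod2_cases (∑ j ∈ Sᶜ, v (j - i)) with hb | hb
          · rw [hb] at h2; simp at h2
          · exact hb
      obtain ⟨i, hiS, hsum⟩ := hex
      refine ⟨ZMod.val (-i), ?_, ?_⟩
      · rw [dot_shift]
        have hk : ((ZMod.val (-i) : ℕ) : ZMod n) = -i := by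
          simp [ZMod.natCast_val, ZMod.cast_id]
        rw [hk]
        have hrw : ∀ j : ZMod n, v (j + -i) * x j = v (j - i) * x j := by
          intro j; rw [sub_eq_add_neg]
        rw [Fintype.sum_congr _ _ hrw, sum_mul_eq, ← hSdef]
        exact hsum
      · have hd := dot_ehat (cshift^[ZMod.val (-i)] x)
        rw [sum_shift, cshift_iterate, hsumx, hc] at hd
        have hk : ((ZMod.val (-i) : ℕ) : ZMod n) = -i := by
          simp [ZMod.natCast_val, ZMod.cast_id]
        rw [hk, zero_sub, neg_neg] at hd
        have hx0 : x i = 0 := by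
          rcases zmod2_cases (x i) with h | h
          · exact h
          · exact absurd (Finset.mem_filter.mpr ⟨Finset.mem_univ i, h⟩) hiS
        rw [hx0, add_zero] at hd
        exact hd
    · -- |S| odd: find i ∈ S with even outdegree
      have hex : ∃ i ∈ S, ∑ j ∈ S, v (j - i) = 0 := by
        by_contra hcon
        push_neg at hcon
        apply hno
        refine ⟨S, (cast_odd_iff _).mp hc, fun i hi => ?_⟩
        rw [← cast_odd_iff, card_filter_cast]
        exact (zmod2_cases _).resolve_left (hcon i hi)
      obtain ⟨i, hiS, hsum⟩ := hex
      refine ⟨ZMod.val (-i), ?_, ?_⟩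
      · rw [dot_shift]
        have hk : ((ZMod.val (-i) : ℕ) : ZMod n) = -i := by
          simp [ZMod.natCast_val, ZMod.cast_id]
        rw [hk]
        have hrw : ∀ j : ZMod n, v (j + -i) * x j = v (j - i) * x j := by
          intro j; rw [sub_eq_add_neg]
        rw [Fintype.sum_congr _ _ hrw, sum_mul_eq, ← hSdef]
        exact hsum
      · have hd := dot_ehat (cshift^[ZMod.val (-i)] x)
        rw [sum_shift, cshift_iterate, hsumx, hc] at hd
        have hk : ((ZMod.val (-i) : ℕ) : ZMod n) = -i := by
          simp [ZMod.natCast_val, ZMod.cast_id]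
        rw [hk, zero_sub, neg_neg] at hd
        have hx1 : x i = 1 := (Finset.mem_filter.mp hiS).2
        rw [hx1] at hd
        rwa [add_eq_right] at hd
end

section
/- Under the standing assumptions (p an odd prime, v ∈ 𝔽_2^p a nonzero small vector with v_0 = 0 that works together with ê, and k the girth of v), let C ⊆ ℤ/pℤ be the vertex set of a directed cycle of length k in G_v, i.e. C = {c_1,…,c_k} with c_1,…,c_k distinct and v_{c_{t+1}−c_t} = 1 for all t (indices of c taken cyclically). Then for any i ∉ C, the number of j ∈ C with v_{j−i} = 1 plus the number of j ∈ C with v_{i−j} = 1 is at least 2 (i.e. there are at least two edges of G_v between i and C, ignoring direction). -/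
/-- A vector `v ∈ 𝔽₂ᵖ` is small if there is no `i` with `v i = v (-i) = 1`. -/
def IsSmall {n : ℕ} (v : ZMod n → ZMod 2) : Prop :=
  ¬ ∃ i : ZMod n, v i = 1 ∧ v (-i) = 1

/-- The set `A = {i : v i = 1}` associated to a vector `v`. -/
def Asupp {n : ℕ} [NeZero n] (v : ZMod n → ZMod 2) : Finset (ZMod n) :=
  Finset.univ.filter fun i => v i = 1

/-- The girth of `v`: the least `m ≥ 1` such that `0` is a sum of `m` elements of
`A = {i : v i = 1}`; equivalently, the length of the shortest directed cycle in the Cayley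
digraph `G_v` on `ℤ/nℤ` with an arc from `i` to `i + j` whenever `v j = 1`. -/
noncomputable def girth {n : ℕ} [NeZero n] (v : ZMod n → ZMod 2) : ℕ :=
  sInf {m : ℕ | 0 < m ∧ ∃ f : Fin m → ZMod n, (∀ t, f t ∈ Asupp v) ∧ ∑ t, f t = 0}

set_option linter.unusedSectionVars false
set_option linter.unusedVariables false

namespace TwoEdges
open Finset

lemma zmod2_cases (x : ZMod 2) : x = 0 ∨ x = 1 := by revert x; decide

variable {p : ℕ} [NeZero p]

lemma cshift_iter (k : ℕ) (x : ZMod p → ZMod 2) (i : ZMod p) :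
    (cshift^[k] x) i = x (i - (k : ZMod p)) := by
  induction k generalizing i with
  | zero => simp
  | succ k ih =>
      rw [Function.iterate_succ_apply']
      show (cshift^[k] x) (i - 1) = _
      rw [ih]; push_cast; ring_nf

/-- indicator of a finset -/
def ind (S : Finset (ZMod p)) : ZMod p → ZMod 2 := fun w => if w ∈ S then 1 else 0

lemma ind_eq_one {S : Finset (ZMod p)} {w : ZMod p} (h : ind S w = 1) : w ∈ S := by
  by_contra hc; unfold ind at h; simp [hc] at h

lemma ind_of_mem {S : Finset (ZMod p)} {w : ZMod p} (h : w ∈ S) : ind S w = 1 := by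
  unfold ind; simp [h]

lemma dot_shift (v : ZMod p → ZMod 2) (y : ZMod p → ZMod 2) (k : ℕ) :
    dot v (cshift^[k] y) = ∑ i : ZMod p, v i * y (i - (k : ZMod p)) := by
  unfold dot
  exact Finset.sum_congr rfl (fun i _ => by rw [cshift_iter k y i])

lemma sum_shift (y : ZMod p → ZMod 2) (a : ZMod p) :
    ∑ i : ZMod p, y (i - a) = ∑ i : ZMod p, y i := by
  have := Equiv.sum_comp (Equiv.subRight a) y
  simpa [Equiv.subRight_apply] using this

lemma dot_ehat (y : ZMod p → ZMod 2) (k : ℕ) :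
    dot (ehat p) (cshift^[k] y) = (∑ i : ZMod p, y i) + y (-(k : ZMod p)) := by
  rw [dot_shift]
  have h1 : ∀ i : ZMod p, ehat p i * y (i - (k:ZMod p))
      = y (i - (k:ZMod p)) + (if i = 0 then y (i - (k:ZMod p)) else 0) := by
    intro i
    by_cases h : i = 0
    · subst h
      show ehat p 0 * y (0 - _) = _
      have : ehat p 0 = 0 := by unfold ehat; simp
      rw [this, zero_mul, if_pos rfl]
      exact (CharTwo.add_self_eq_zero _).symm
    · unfold ehat; simp [h]
  rw [Finset.sum_congr rfl (fun i _ => h1 i), Finset.sum_add_distrib,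
    Finset.sum_ite_eq' Finset.univ (0 : ZMod p)]
  rw [sum_shift]
  simp

lemma sum_ind (S : Finset (ZMod p)) : ∑ i : ZMod p, ind S i = (S.card : ZMod 2) := by
  unfold ind
  rw [Finset.sum_ite_mem]
  simp

lemma sum_ind_neg (S : Finset (ZMod p)) : ∑ i : ZMod p, ind S (-i) = (S.card : ZMod 2) := by
  have := Equiv.sum_comp (Equiv.neg (ZMod p)) (ind S)
  simp only [Equiv.neg_apply] at this
  rw [this, sum_ind]

lemma dot_v_ind (v : ZMod p → ZMod 2) (S : Finset (ZMod p)) (k : ℕ) :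
    dot v (cshift^[k] (ind S)) = ∑ w ∈ S, v (w + (k : ZMod p)) := by
  classical
  rw [dot_shift]
  have h1 : ∀ i : ZMod p, v i * ind S (i - (k:ZMod p))
      = if i - (k:ZMod p) ∈ S then v i else 0 := by
    intro i; unfold ind; by_cases h : i - (k:ZMod p) ∈ S <;> simp [h]
  rw [Finset.sum_congr rfl (fun i _ => h1 i), ← Finset.sum_filter]
  apply Finset.sum_nbij' (i := fun i => i - (k:ZMod p)) (j := fun w => w + (k:ZMod p))
  · intro a ha; exact (Finset.mem_filter.mp ha).2
  · intro a ha; simp only [Finset.mem_filter, Finset.mem_univ, true_and]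
    simpa using ha
  · intro a _; ring
  · intro a _; ring
  · intro a _; congr 1; ring

lemma dot_v_ind_neg (v : ZMod p → ZMod 2) (S : Finset (ZMod p)) (k : ℕ) :
    dot v (cshift^[k] (fun w => ind S (-w))) = ∑ w ∈ S, v ((k : ZMod p) - w) := by
  classical
  rw [dot_shift]
  have h1 : ∀ i : ZMod p, v i * ind S (-(i - (k:ZMod p)))
      = if -(i - (k:ZMod p)) ∈ S then v i else 0 := by
    intro i; unfold ind; by_cases h : -(i - (k:ZMod p)) ∈ S <;> simp [h]
  rw [Finset.sum_congr rfl (fun i _ => h1 i), ← Finset.sum_filter]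
  apply Finset.sum_nbij' (i := fun i => -(i - (k:ZMod p))) (j := fun w => (k:ZMod p) - w)
  · intro a ha; exact (Finset.mem_filter.mp ha).2
  · intro a ha; simp only [Finset.mem_filter, Finset.mem_univ, true_and]
    have : -((k:ZMod p) - a - (k:ZMod p)) = a := by ring
    rw [this]; simpa using ha
  · intro a _; ring
  · intro a _; ring
  · intro a _; congr 1; ring

/-- First orientation: odd set has a vertex with even out-parity. -/
lemma works_odd {v : ZMod p → ZMod 2} (hwork : WorkTogether2 v (ehat p))
    (S : Finset (ZMod p)) (hodd : (S.card : ZMod 2) = 1) :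
    ∃ u ∈ S, ∑ w ∈ S, v (w - u) = 0 := by
  classical
  obtain ⟨k, hv, he⟩ := hwork (ind S)
  rw [dot_ehat, sum_ind, hodd] at he
  have he2 : ind S (-(k:ZMod p)) = 1 := by
    rcases zmod2_cases (ind S (-(k:ZMod p))) with h | h
    · rw [h, add_zero] at he; exact absurd he (by decide)
    · exact h
  refine ⟨-(k : ZMod p), ind_eq_one he2, ?_⟩
  rw [dot_v_ind] at hv
  rw [← hv]
  apply Finset.sum_congr rfl
  intro w _
  congr 1; ring

/-- Second orientation: odd set has a vertex with even in-parity. -/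
lemma works_odd' {v : ZMod p → ZMod 2} (hwork : WorkTogether2 v (ehat p))
    (S : Finset (ZMod p)) (hodd : (S.card : ZMod 2) = 1) :
    ∃ u ∈ S, ∑ w ∈ S, v (u - w) = 0 := by
  classical
  obtain ⟨k, hv, he⟩ := hwork (fun w => ind S (-w))
  rw [dot_ehat, sum_ind_neg] at he
  rw [hodd] at he
  have he2 : ind S (- -(k:ZMod p)) = 1 := by
    rcases zmod2_cases (ind S (- -(k:ZMod p))) with h | h
    · rw [h, add_zero] at he; exact absurd he (by decide)
    · exact h
  rw [neg_neg] at he2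
  refine ⟨(k : ZMod p), ind_eq_one he2, ?_⟩
  rw [dot_v_ind_neg] at hv
  exact hv


lemma sum_zmod2_card {α : Type*} [DecidableEq α] (J : Finset α) (f : α → ZMod 2) :
    ∑ w ∈ J, f w = ((J.filter fun w => f w = 1).card : ZMod 2) := by
  classical
  rw [← Finset.sum_filter_add_sum_filter_not J (fun w => f w = 1)]
  have h1 : ∑ w ∈ J.filter (fun w => f w = 1), f w
      = ((J.filter fun w => f w = 1).card : ZMod 2) := by
    rw [Finset.sum_congr rfl (fun w hw => (Finset.mem_filter.mp hw).2)]
    simp [Finset.sum_const, nsmul_eq_mul]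
  have h2 : ∑ w ∈ J.filter (fun w => ¬ f w = 1), f w = 0 := by
    apply Finset.sum_eq_zero
    intro w hw
    rcases zmod2_cases (f w) with h | h
    · exact h
    · exact absurd h (Finset.mem_filter.mp hw).2
  rw [h1, h2, add_zero]

section Cycle

variable {v : ZMod p → ZMod 2}

lemma girth_le (m : ℕ) (hm : 0 < m) (f : Fin m → ZMod p)
    (hA : ∀ t, v (f t) = 1) (hs : ∑ t, f t = 0) : girth v ≤ m :=
  Nat.sInf_le ⟨hm, f, fun t => Finset.mem_filter.mpr ⟨Finset.mem_univ _, hA t⟩, hs⟩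

lemma girth_pos (hv : v ≠ 0) : 0 < girth v := by
  have ha : ∃ a : ZMod p, v a = 1 := by
    by_contra hc
    push_neg at hc
    apply hv
    funext a
    rcases zmod2_cases (v a) with h | h
    · exact h
    · exact absurd h (hc a)
  obtain ⟨a, ha⟩ := ha
  have hmem : p ∈ {m : ℕ | 0 < m ∧ ∃ f : Fin m → ZMod p, (∀ t, f t ∈ Asupp v) ∧ ∑ t, f t = 0} := by
    refine ⟨Nat.pos_of_ne_zero (NeZero.ne p), fun _ => a,
      fun t => Finset.mem_filter.mpr ⟨Finset.mem_univ _, ha⟩, ?_⟩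
    rw [Finset.sum_const, Finset.card_univ, Fintype.card_fin, nsmul_eq_mul,
      ZMod.natCast_self, zero_mul]
  exact (Nat.sInf_mem ⟨p, hmem⟩).1

/-- the `ℕ`-indexed vertex function of a cycle -/
noncomputable def cf (v : ZMod p → ZMod 2) (e : Fin (girth v) → ZMod p) (hg : 0 < girth v) (t : ℕ) : ZMod p :=
  e ⟨t % girth v, Nat.mod_lt t hg⟩

lemma cf_period (e : Fin (girth v) → ZMod p) (hg : 0 < girth v) (t : ℕ) :
    cf v e hg (t + girth v) = cf v e hg t := by
  unfold cf
  congr 1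
  exact Fin.ext (Nat.add_mod_right t _)

lemma cf_lt (e : Fin (girth v) → ZMod p) (hg : 0 < girth v) (t : ℕ) (ht : t < girth v) :
    cf v e hg t = e ⟨t, ht⟩ := by
  unfold cf
  congr 1
  exact Fin.ext (Nat.mod_eq_of_lt ht)

lemma finRotate_val (g : ℕ) (hg : 0 < g) (a : ℕ) (ha : a < g) :
    ((finRotate g) ⟨a, ha⟩ : Fin g).val = (a + 1) % g := by
  rcases g with _ | g'
  · omega
  · rw [finRotate_succ_apply, Fin.val_add]
    have h1 : (1 : Fin (g' + 1)).val = 1 % (g' + 1) := Fin.val_one' (g' + 1)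
    rw [h1]
    show (a + 1 % (g' + 1)) % (g' + 1) = (a + 1) % (g' + 1)
    conv_rhs => rw [Nat.add_mod a 1 (g' + 1)]
    rw [Nat.mod_eq_of_lt ha]

lemma cf_arc (e : Fin (girth v) → ZMod p) (hg : 0 < girth v)
    (he2 : ∀ t, v (e (finRotate (girth v) t) - e t) = 1) (t : ℕ) :
    v (cf v e hg (t + 1) - cf v e hg t) = 1 := by
  have h := he2 ⟨t % girth v, Nat.mod_lt t hg⟩
  have heq : e (finRotate (girth v) ⟨t % girth v, Nat.mod_lt t hg⟩) = cf v e hg (t + 1) := by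
    unfold cf
    congr 1
    apply Fin.ext
    rw [finRotate_val _ hg _ (Nat.mod_lt t hg)]
    show (t % girth v + 1) % girth v = (t + 1) % girth v
    rw [Nat.mod_add_mod]
  rw [heq] at h
  exact h

lemma cf_tele (e : Fin (girth v) → ZMod p) (hg : 0 < girth v) (a m : ℕ) :
    ∑ i ∈ Finset.range m, (cf v e hg (a + i + 1) - cf v e hg (a + i))
      = cf v e hg (a + m) - cf v e hg a := by
  induction m with
  | zero => simp
  | succ m ih =>
      rw [Finset.sum_range_succ, ih]
      have : a + (m + 1) = a + m + 1 := by omega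
      rw [this]
      ring

lemma arc_eq (h0 : v 0 = 0) (e : Fin (girth v) → ZMod p) (hg : 0 < girth v)
    (he2 : ∀ t, v (e (finRotate (girth v) t) - e t) = 1)
    (s t : Fin (girth v)) (harc : v (e t - e s) = 1) : t = finRotate (girth v) s := by
  by_cases hts : t = s
  · exfalso
    rw [hts, sub_self, h0] at harc
    exact absurd harc (by decide)
  have hag : s.val < girth v := s.isLt
  have hbg : t.val < girth v := t.isLt
  have hab : s.val ≠ t.val := fun h => hts (Fin.ext h.symm)
  have hMg : (s.val + girth v - t.val) % girth v < girth v := Nat.mod_lt _ hg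
  set M := (s.val + girth v - t.val) % girth v with hMdef
  have hM0 : M ≠ 0 := by
    intro h
    have hd : girth v ∣ (s.val + girth v - t.val) := Nat.dvd_of_mod_eq_zero (by rw [← hMdef, h])
    obtain ⟨q, hq⟩ := hd
    have h2g : girth v * 2 ≤ girth v * q ∨ q < 2 := by
      rcases Nat.lt_or_ge q 2 with h2 | h2
      · exact Or.inr h2
      · exact Or.inl (Nat.mul_le_mul_left _ h2)
    rcases h2g with h2 | h2
    · omega
    · interval_cases q <;> omega
  set f : Fin (M + 1) → ZMod p :=
    Fin.cases (e t - e s)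
      (fun i => cf v e hg (t.val + i.val + 1) - cf v e hg (t.val + i.val)) with hfdef
  have hfA : ∀ i, v (f i) = 1 := by
    intro i
    induction i using Fin.cases with
    | zero => rw [hfdef]; simpa using harc
    | succ j =>
        rw [hfdef]
        simpa using cf_arc e hg he2 (t.val + j.val)
  have hbM : cf v e hg (t.val + M) = e s := by
    have h1 : (t.val + M) % girth v = s.val := by
      rw [hMdef, Nat.add_mod_mod]
      have hx : t.val + (s.val + girth v - t.val) = s.val + girth v := by omega
      rw [hx, Nat.add_mod_right, Nat.mod_eq_of_lt hag]
    unfold cf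
    congr 1
    apply Fin.ext
    show (t.val + M) % girth v = s.val
    exact h1
  have hfsum : ∑ i, f i = 0 := by
    rw [Fin.sum_univ_succ]
    have h2 : ∀ j : Fin M, f j.succ
        = cf v e hg (t.val + j.val + 1) - cf v e hg (t.val + j.val) := by
      intro j; rw [hfdef]; simp
    rw [Finset.sum_congr rfl (fun j _ => h2 j)]
    have h3 : ∑ j : Fin M, (cf v e hg (t.val + j.val + 1) - cf v e hg (t.val + j.val))
        = cf v e hg (t.val + M) - cf v e hg t.val := by
      rw [Fin.sum_univ_eq_sum_range (fun j => cf v e hg (t.val + j + 1) - cf v e hg (t.val + j))]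
      exact cf_tele e hg t.val M
    rw [h3, hbM]
    have h4 : cf v e hg t.val = e t := by
      rw [cf_lt e hg t.val hbg]
    rw [hfdef]
    simp only [Fin.cases_zero]
    rw [h4]
    ring
  have hgle : girth v ≤ M + 1 := girth_le (M + 1) (Nat.succ_pos M) f hfA hfsum
  have hMg1 : M = girth v - 1 := by omega
  apply Fin.ext
  rw [finRotate_val (girth v) hg s.val hag]
  show t.val = (s.val + 1) % girth v
  have hX : s.val + girth v - t.val = girth v - 1
      ∨ s.val + girth v - t.val = 2 * girth v - 1 := by
    have hdm := Nat.div_add_mod (s.val + girth v - t.val) (girth v)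
    rw [← hMdef, hMg1] at hdm
    have h2g : girth v * 2 ≤ girth v * ((s.val + girth v - t.val) / girth v)
        ∨ (s.val + girth v - t.val) / girth v < 2 := by
      rcases Nat.lt_or_ge ((s.val + girth v - t.val) / girth v) 2 with h2 | h2
      · exact Or.inr h2
      · exact Or.inl (Nat.mul_le_mul_left _ h2)
    rcases h2g with h2 | h2
    · omega
    · set q := (s.val + girth v - t.val) / girth v
      interval_cases q <;> omega
  rcases hX with h | h
  · have hb : t.val = s.val + 1 := by omega
    rw [Nat.mod_eq_of_lt (by omega : s.val + 1 < girth v)]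
    exact hb
  · have hb : t.val = 0 := by omega
    have hag1 : s.val + 1 = girth v := by omega
    rw [hag1, Nat.mod_self]
    exact hb

lemma arc_ite (h0 : v 0 = 0) (e : Fin (girth v) → ZMod p) (hg : 0 < girth v)
    (he2 : ∀ t, v (e (finRotate (girth v) t) - e t) = 1)
    (s m : Fin (girth v)) :
    v (e m - e s) = if m = finRotate (girth v) s then 1 else 0 := by
  by_cases h : m = finRotate (girth v) s
  · rw [if_pos h, h]; exact he2 s
  · rw [if_neg h]
    rcases zmod2_cases (v (e m - e s)) with hh | hh
    · exact hh
    · exact absurd (arc_eq h0 e hg he2 s m hh) h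

lemma sum_arc_out (h0 : v 0 = 0) (e : Fin (girth v) → ZMod p) (hg : 0 < girth v)
    (he2 : ∀ t, v (e (finRotate (girth v) t) - e t) = 1) (s : Fin (girth v)) :
    ∑ m, v (e m - e s) = 1 := by
  rw [Finset.sum_congr rfl (fun m _ => arc_ite h0 e hg he2 s m)]
  simp

lemma sum_arc_in (h0 : v 0 = 0) (e : Fin (girth v) → ZMod p) (hg : 0 < girth v)
    (he2 : ∀ t, v (e (finRotate (girth v) t) - e t) = 1) (s : Fin (girth v)) :
    ∑ m, v (e s - e m) = 1 := by
  rw [Finset.sum_congr rfl (fun m _ => arc_ite h0 e hg he2 m s)]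
  have := Equiv.sum_comp (finRotate (girth v))
    (fun u => if s = u then (1 : ZMod 2) else 0)
  calc ∑ m, (if s = finRotate (girth v) m then (1:ZMod 2) else 0)
      = ∑ u, (if s = u then (1:ZMod 2) else 0) := this
    _ = 1 := by simp

lemma girth_even (hwork : WorkTogether2 v (ehat p)) (h0 : v 0 = 0) (hg : 0 < girth v)
    (c : Fin (girth v) → ZMod p) (hinj : Function.Injective c)
    (hcyc : ∀ t, v (c (finRotate (girth v) t) - c t) = 1) :
    Even (girth v) := by
  rcases Nat.even_or_odd (girth v) with he | ho
  · exact he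
  exfalso
  have hcard : ((Finset.univ.image c).card : ZMod 2) = 1 := by
    rw [Finset.card_image_of_injective _ hinj, Finset.card_univ, Fintype.card_fin]
    obtain ⟨k, hk⟩ := ho
    rw [hk]
    push_cast
    ring_nf
    simp [CharTwo.two_eq_zero]
  obtain ⟨u, hu, hsum⟩ := works_odd hwork (Finset.univ.image c) hcard
  obtain ⟨t₀, _, rfl⟩ := Finset.mem_image.mp hu
  rw [Finset.sum_image (fun a _ b _ h => hinj h)] at hsum
  rw [sum_arc_out h0 c hg hcyc t₀] at hsum
  exact absurd hsum (by decide)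

/-- edge count between a vertex `z` and a finset `J` -/
def edgeCount (v : ZMod p → ZMod 2) (z : ZMod p) (J : Finset (ZMod p)) : ℕ :=
  (J.filter fun w => v (w - z) = 1).card + (J.filter fun w => v (z - w) = 1).card

lemma card_filter_image (P : ZMod p → Prop) [DecidablePred P]
    (e : Fin (girth v) → ZMod p) (he1 : Function.Injective e) :
    ((Finset.univ.image e).filter P).card = (Finset.univ.filter fun m => P (e m)).card := by
  rw [Finset.filter_image, Finset.card_image_of_injective _ he1]

/-- One-edge elimination: no girth cycle admits an outside vertex joined by exactly one edge. -/
lemma one_edge (hwork : WorkTogether2 v (ehat p)) (h0 : v 0 = 0) (hg : 0 < girth v)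
    (hgev : Even (girth v))
    (e : Fin (girth v) → ZMod p) (he1 : Function.Injective e)
    (he2 : ∀ t, v (e (finRotate (girth v) t) - e t) = 1)
    (z : ZMod p) (hz : z ∉ Finset.univ.image e)
    (hone : edgeCount v z (Finset.univ.image e) = 1) : False := by
  classical
  set α := ((Finset.univ.image e).filter fun w => v (w - z) = 1).card with hα
  set β := ((Finset.univ.image e).filter fun w => v (z - w) = 1).card with hβ
  have hαβ : α + β = 1 := hone
  set S := insert z (Finset.univ.image e) with hS
  have hScard : (S.card : ZMod 2) = 1 := by
    rw [hS, Finset.card_insert_of_notMem hz,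
      Finset.card_image_of_injective _ he1, Finset.card_univ, Fintype.card_fin]
    obtain ⟨k, hk⟩ := hgev
    rw [hk]
    push_cast
    ring_nf
    simp [CharTwo.two_eq_zero]
  -- α as a sum
  have hsumα : ∑ m, v (e m - z) = (α : ZMod 2) := by
    rw [sum_zmod2_card Finset.univ (fun m => v (e m - z)), hα,
      card_filter_image (fun w => v (w - z) = 1) e he1]
  have hsumβ : ∑ m, v (z - e m) = (β : ZMod 2) := by
    rw [sum_zmod2_card Finset.univ (fun m => v (z - e m)), hβ,
      card_filter_image (fun w => v (z - w) = 1) e he1]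
  -- first pass: conclude α = 0 and β = 1
  have hkey : α = 0 ∧ β = 1 := by
    obtain ⟨u, hu, hsum⟩ := works_odd hwork S hScard
    rw [hS, Finset.sum_insert hz] at hsum
    rw [Finset.sum_image (fun a _ b _ h => he1 h)] at hsum
    rcases Finset.mem_insert.mp hu with rfl | hu2
    · -- u = z
      rw [sub_self, h0, zero_add] at hsum
      rw [hsumα] at hsum
      have : α = 0 := by
        rcases Nat.lt_or_ge α 2 with h2 | h2
        · interval_cases α
          · rfl
          · exact absurd hsum (by decide)
        · omega
      omega
    · obtain ⟨t₀, _, rfl⟩ := Finset.mem_image.mp hu2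
      rw [sum_arc_out h0 e hg he2 t₀] at hsum
      have hv1 : v (z - e t₀) = 1 := by
        rcases zmod2_cases (v (z - e t₀)) with hh | hh
        · rw [hh, zero_add] at hsum; exact absurd hsum (by decide)
        · exact hh
      have hβ1 : 1 ≤ β := by
        rw [hβ]
        refine Finset.card_pos.mpr ⟨e t₀, Finset.mem_filter.mpr ⟨Finset.mem_image_of_mem e (Finset.mem_univ t₀), hv1⟩⟩
      omega
  obtain ⟨hα0, hβ1⟩ := hkey
  -- second pass: contradiction
  obtain ⟨u, hu, hsum⟩ := works_odd' hwork S hScard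
  rw [hS, Finset.sum_insert hz] at hsum
  rw [Finset.sum_image (fun a _ b _ h => he1 h)] at hsum
  rcases Finset.mem_insert.mp hu with rfl | hu2
  · rw [sub_self, h0, zero_add] at hsum
    rw [hsumβ, hβ1] at hsum
    exact absurd hsum (by decide)
  · obtain ⟨t₀, _, rfl⟩ := Finset.mem_image.mp hu2
    rw [sum_arc_in h0 e hg he2 t₀] at hsum
    have hv1 : v (e t₀ - z) = 1 := by
      rcases zmod2_cases (v (e t₀ - z)) with hh | hh
      · rw [hh, zero_add] at hsum; exact absurd hsum (by decide)
      · exact hh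
    have : 1 ≤ α := by
      rw [hα]
      refine Finset.card_pos.mpr ⟨e t₀, Finset.mem_filter.mpr ⟨Finset.mem_image_of_mem e (Finset.mem_univ t₀), hv1⟩⟩
    omega

section Walk

variable (v : ZMod p → ZMod 2) (c : Fin (girth v) → ZMod p) (hg : 0 < girth v)

/-- the pushed word -/
noncomputable def walkW (j i : ℕ) : ZMod p :=
  if i < j then (cf v c hg (i + 2) - cf v c hg (i + 1))
  else if i = j then (cf v c hg 1 - cf v c hg 0)
  else (cf v c hg (i + 1) - cf v c hg i)

/-- the vertices of the `n`-th cycle of the walk -/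
noncomputable def walkD (n m : ℕ) : ZMod p :=
  (cf v c hg 0 - ((n / girth v : ℕ) : ZMod p) * (cf v c hg 1 - cf v c hg 0))
  + ∑ i ∈ Finset.range m, walkW v c hg (n % girth v) i

variable {v c hg}

lemma walkW_val (hcyc : ∀ t, v (c (finRotate (girth v) t) - c t) = 1) (j i : ℕ) :
    v (walkW v c hg j i) = 1 := by
  unfold walkW
  split
  · have := cf_arc c hg hcyc (i + 1)
    simpa [show i + 1 + 1 = i + 2 by omega] using this
  · split
    · exact cf_arc c hg hcyc 0
    · exact cf_arc c hg hcyc i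

lemma walkW_sum_le {j m : ℕ} (hm : m ≤ j) :
    ∑ i ∈ Finset.range m, walkW v c hg j i = cf v c hg (m + 1) - cf v c hg 1 := by
  have h1 : ∀ i ∈ Finset.range m, walkW v c hg j i
      = cf v c hg (1 + i + 1) - cf v c hg (1 + i) := by
    intro i hi
    have hij : i < j := lt_of_lt_of_le (Finset.mem_range.mp hi) hm
    unfold walkW
    rw [if_pos hij]
    congr 1 <;> [skip; skip] <;> congr 1 <;> omega
  rw [Finset.sum_congr rfl h1, cf_tele c hg 1 m]
  congr 2
  omega

lemma walkW_sum_gt {j m : ℕ} (hm : j < m) :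
    ∑ i ∈ Finset.range m, walkW v c hg j i = cf v c hg m - cf v c hg 0 := by
  have hsplit : ∑ i ∈ Finset.range m, walkW v c hg j i
      = (∑ i ∈ Finset.range (j + 1), walkW v c hg j i)
        + ∑ i ∈ Finset.Ico (j + 1) m, walkW v c hg j i :=
    (Finset.sum_range_add_sum_Ico _ (by omega)).symm
  have h2 : ∑ i ∈ Finset.range (j + 1), walkW v c hg j i
      = cf v c hg (j + 1) - cf v c hg 0 := by
    rw [Finset.sum_range_succ, walkW_sum_le (le_refl j)]
    have : walkW v c hg j j = cf v c hg 1 - cf v c hg 0 := by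
      unfold walkW
      rw [if_neg (lt_irrefl j), if_pos rfl]
    rw [this]
    ring
  have h3 : ∑ i ∈ Finset.Ico (j + 1) m, walkW v c hg j i
      = cf v c hg m - cf v c hg (j + 1) := by
    have h4 : ∀ i ∈ Finset.Ico (j + 1) m, walkW v c hg j i
        = cf v c hg (i + 1) - cf v c hg i := by
      intro i hi
      have := Finset.mem_Ico.mp hi
      unfold walkW
      rw [if_neg (by omega), if_neg (by omega)]
    rw [Finset.sum_congr rfl h4, Finset.sum_Ico_eq_sum_range]
    have h5 : ∀ i ∈ Finset.range (m - (j + 1)), cf v c hg (j + 1 + i + 1) - cf v c hg (j + 1 + i)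
        = cf v c hg ((j+1) + i + 1) - cf v c hg ((j+1) + i) := fun i _ => rfl
    rw [Finset.sum_congr rfl h5, cf_tele c hg (j + 1) (m - (j + 1))]
    congr 2
    omega
  rw [hsplit, h2, h3]
  ring

lemma walkD_le {n m : ℕ} (hm : m ≤ n % girth v) :
    walkD v c hg n m = cf v c hg (m + 1) - cf v c hg 1 + cf v c hg 0
      - ((n / girth v : ℕ) : ZMod p) * (cf v c hg 1 - cf v c hg 0) := by
  unfold walkD
  rw [walkW_sum_le hm]
  ring

lemma walkD_gt {n m : ℕ} (hm : n % girth v < m) :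
    walkD v c hg n m = cf v c hg m
      - ((n / girth v : ℕ) : ZMod p) * (cf v c hg 1 - cf v c hg 0) := by
  unfold walkD
  rw [walkW_sum_gt hm]
  ring

lemma walkD_step (n m : ℕ) :
    walkD v c hg n (m + 1) - walkD v c hg n m = walkW v c hg (n % girth v) m := by
  unfold walkD
  rw [Finset.sum_range_succ]
  ring

lemma walkW_sum_all (n : ℕ) :
    ∑ i ∈ Finset.range (girth v), walkW v c hg (n % girth v) i = 0 := by
  rw [walkW_sum_gt (Nat.mod_lt n hg)]
  have : cf v c hg (girth v) = cf v c hg 0 := by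
    have := cf_period c hg 0
    simpa using this
  rw [this]
  ring

lemma walkD_wrap (n : ℕ) :
    walkD v c hg n 0 - walkD v c hg n (girth v - 1)
      = walkW v c hg (n % girth v) (girth v - 1) := by
  have h1 : walkD v c hg n (girth v - 1) + walkW v c hg (n % girth v) (girth v - 1)
      = walkD v c hg n (girth v) := by
    have := walkD_step (v := v) (c := c) (hg := hg) n (girth v - 1)
    have hgg : girth v - 1 + 1 = girth v := by omega
    rw [hgg] at this
    linear_combination -this
  have h2 : walkD v c hg n (girth v) = walkD v c hg n 0 := by
    unfold walkD
    rw [walkW_sum_all]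
    simp
  linear_combination -h1 - h2

/-- the `n`-th cycle of the walk, as a `Fin`-function -/
noncomputable def em (v : ZMod p → ZMod 2) (c : Fin (girth v) → ZMod p) (hg : 0 < girth v)
    (n : ℕ) : Fin (girth v) → ZMod p :=
  fun m => walkD v c hg n m.val

lemma em_inj (hcyc : ∀ t, v (c (finRotate (girth v) t) - c t) = 1) (n : ℕ) :
    Function.Injective (em v c hg n) := by
  intro m₁ m₂ hmm
  by_contra hne
  -- wlog m₁ < m₂
  wlog hlt : m₁.val < m₂.val generalizing m₁ m₂
  · exact this hmm.symm (fun h => hne h.symm) (by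
      rcases Nat.lt_or_ge m₂.val m₁.val with h | h
      · exact h
      · exfalso; exact hne (Fin.ext (by omega : m₁.val = m₂.val)))
  have hsum : ∑ i ∈ Finset.Ico m₁.val m₂.val, walkW v c hg (n % girth v) i = 0 := by
    have e1 : walkD v c hg n m₂.val - walkD v c hg n m₁.val
        = ∑ i ∈ Finset.Ico m₁.val m₂.val, walkW v c hg (n % girth v) i := by
      unfold walkD
      rw [← Finset.sum_range_add_sum_Ico _ (le_of_lt hlt)]
      ring
    unfold em at hmm
    rw [← e1, hmm]
    ring
  set L := m₂.val - m₁.val with hL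
  have hL1 : 0 < L := by omega
  have hLg : L < girth v := by
    have := m₂.isLt
    omega
  have hgle : girth v ≤ L := by
    apply girth_le L hL1 (fun i : Fin L => walkW v c hg (n % girth v) (m₁.val + i.val))
    · intro t
      exact walkW_val hcyc _ _
    · rw [Fin.sum_univ_eq_sum_range (fun i => walkW v c hg (n % girth v) (m₁.val + i))]
      rw [← Finset.sum_Ico_eq_sum_range]
      exact hsum
  omega

lemma em_arc (hcyc : ∀ t, v (c (finRotate (girth v) t) - c t) = 1) (n : ℕ) :
    ∀ t, v (em v c hg n (finRotate (girth v) t) - em v c hg n t) = 1 := by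
  intro t
  have htlt := t.isLt
  have hval : (finRotate (girth v) t).val = (t.val + 1) % girth v := by
    have : t = (⟨t.val, htlt⟩ : Fin (girth v)) := Fin.ext rfl
    rw [this]
    exact finRotate_val (girth v) hg t.val htlt
  by_cases hend : t.val + 1 < girth v
  · have h1 : (finRotate (girth v) t).val = t.val + 1 := by
      rw [hval, Nat.mod_eq_of_lt hend]
    unfold em
    rw [h1]
    rw [walkD_step]
    exact walkW_val hcyc _ _
  · have hteq : t.val = girth v - 1 := by omega
    have h1 : (finRotate (girth v) t).val = 0 := by
      rw [hval]
      have : t.val + 1 = girth v := by omega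
      rw [this, Nat.mod_self]
    unfold em
    rw [h1, hteq, walkD_wrap]
    exact walkW_val hcyc _ _

lemma em_zero : ∀ t, em v c hg 0 t = c t := by
  intro t
  unfold em
  have h0g : (0 : ℕ) % girth v = 0 := Nat.zero_mod _
  have h0d : (0 : ℕ) / girth v = 0 := Nat.zero_div _
  by_cases ht : t.val = 0
  · rw [walkD_le (by omega)]
    rw [h0d, ht]
    push_cast
    rw [cf_lt c hg 0 hg]
    have : (⟨0, hg⟩ : Fin (girth v)) = t := Fin.ext (by simp [ht])
    rw [this]
    ring
  · rw [walkD_gt (by omega)]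
    rw [h0d]
    push_cast
    rw [cf_lt c hg t.val t.isLt]
    have : (⟨t.val, t.isLt⟩ : Fin (girth v)) = t := Fin.ext rfl
    rw [this]
    ring

lemma em_hit (hp2 : Nat.Prime p) (z : ZMod p)
    (hd : cf v c hg 1 - cf v c hg 0 ≠ 0) :
    ∃ R : ℕ, em v c hg (R * girth v) ⟨0, hg⟩ = z := by
  haveI : Fact (Nat.Prime p) := ⟨hp2⟩
  set d := cf v c hg 1 - cf v c hg 0 with hdd
  refine ⟨((cf v c hg 0 - z) * d⁻¹).val, ?_⟩
  unfold em
  show walkD v c hg (((cf v c hg 0 - z) * d⁻¹).val * girth v) 0 = z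
  have hmod : (((cf v c hg 0 - z) * d⁻¹).val * girth v) % girth v = 0 := Nat.mul_mod_left _ _
  have hdiv : (((cf v c hg 0 - z) * d⁻¹).val * girth v) / girth v
      = ((cf v c hg 0 - z) * d⁻¹).val := Nat.mul_div_cancel _ hg
  rw [walkD_le (by rw [hmod] : (0:ℕ) ≤ _ % girth v)]
  rw [hdiv]
  rw [ZMod.natCast_val, ZMod.cast_id]
  have hinv : d⁻¹ * d = 1 := by
    field_simp
  calc cf v c hg (0 + 1) - cf v c hg 1 + cf v c hg 0 - (cf v c hg 0 - z) * d⁻¹ * d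
      = cf v c hg 0 - (cf v c hg 0 - z) * (d⁻¹ * d) := by ring
    _ = z := by rw [hinv]; ring

lemma em_adj (n : ℕ) : ∃ w : ZMod p,
    Finset.univ.image (em v c hg (n + 1)) ⊆ insert w (Finset.univ.image (em v c hg n)) := by
  by_cases hj : n % girth v + 1 < girth v
  -- case A : within a round
  · have hmod : (n + 1) % girth v = n % girth v + 1 := by
      conv_lhs => rw [← Nat.div_add_mod n (girth v)]
      rw [Nat.add_assoc, Nat.mul_add_mod]
      exact Nat.mod_eq_of_lt hj
    have hdiv : (n + 1) / girth v = n / girth v := by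
      conv_lhs => rw [← Nat.div_add_mod n (girth v)]
      rw [Nat.add_assoc, Nat.mul_add_div hg]
      rw [Nat.div_eq_of_lt hj, Nat.add_zero]
    refine ⟨walkD v c hg (n + 1) (n % girth v + 1), ?_⟩
    intro w hw
    obtain ⟨m, _, rfl⟩ := Finset.mem_image.mp hw
    by_cases hm : m.val = n % girth v + 1
    · have heq : em v c hg (n+1) m = walkD v c hg (n + 1) (n % girth v + 1) := by
        unfold em; rw [hm]
      rw [heq]
      exact Finset.mem_insert_self _ _
    · apply Finset.mem_insert_of_mem
      apply Finset.mem_image.mpr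
      refine ⟨m, Finset.mem_univ m, ?_⟩
      unfold em
      rcases Nat.lt_or_ge m.val (n % girth v + 1) with hlt | hge
      · have hle : m.val ≤ n % girth v := by omega
        rw [walkD_le hle, walkD_le (by omega : m.val ≤ (n+1) % girth v), hdiv]
      · have hgt : n % girth v < m.val := by omega
        have hgt2 : (n + 1) % girth v < m.val := by omega
        rw [walkD_gt hgt, walkD_gt hgt2, hdiv]
  -- case B : wrap to the next round
  · have hjeq : n % girth v = girth v - 1 := by
      have := Nat.mod_lt n hg
      omega
    have hng : n + 1 = girth v * (n / girth v + 1) := by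
      conv_lhs => rw [← Nat.div_add_mod n (girth v)]
      rw [hjeq]
      have : girth v * (n / girth v) + (girth v - 1) + 1 = girth v * (n / girth v) + girth v := by
        omega
      rw [this]
      ring
    have hmod : (n + 1) % girth v = 0 := by rw [hng]; exact Nat.mul_mod_right _ _
    have hdiv : (n + 1) / girth v = n / girth v + 1 := by
      rw [hng]; exact Nat.mul_div_cancel_left _ hg
    have hcfg : cf v c hg (girth v) = cf v c hg 0 := by
      have := cf_period c hg 0
      simpa using this
    refine ⟨walkD v c hg (n + 1) 1, ?_⟩
    intro w hw
    obtain ⟨m, _, rfl⟩ := Finset.mem_image.mp hw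
    by_cases hm1 : m.val = 1
    · have heq : em v c hg (n+1) m = walkD v c hg (n + 1) 1 := by
        unfold em; rw [hm1]
      rw [heq]
      exact Finset.mem_insert_self _ _
    by_cases hm0 : m.val = 0
    · -- equals walkD n (girth v - 1)
      apply Finset.mem_insert_of_mem
      apply Finset.mem_image.mpr
      refine ⟨⟨girth v - 1, by omega⟩, Finset.mem_univ _, ?_⟩
      unfold em
      show walkD v c hg n (girth v - 1) = walkD v c hg (n+1) m.val
      rw [hm0]
      rw [walkD_le (by omega : girth v - 1 ≤ n % girth v)]
      rw [walkD_le (by omega : (0:ℕ) ≤ (n+1) % girth v)]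
      rw [hdiv]
      have hg1 : girth v - 1 + 1 = girth v := by omega
      rw [hg1, hcfg]
      push_cast
      ring
    · -- m.val ≥ 2 : equals walkD n (m.val - 1)
      apply Finset.mem_insert_of_mem
      apply Finset.mem_image.mpr
      refine ⟨⟨m.val - 1, by omega⟩, Finset.mem_univ _, ?_⟩
      unfold em
      show walkD v c hg n (m.val - 1) = walkD v c hg (n+1) m.val
      rw [walkD_le (by omega : m.val - 1 ≤ n % girth v)]
      rw [walkD_gt (by omega : (n+1) % girth v < m.val)]
      rw [hdiv]
      have hm1' : m.val - 1 + 1 = m.val := by omega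
      rw [hm1']
      push_cast
      ring

lemma edgeCount_mono (z : ZMod p) {J J' : Finset (ZMod p)} (h : J ⊆ J') :
    edgeCount v z J ≤ edgeCount v z J' := by
  unfold edgeCount
  exact Nat.add_le_add
    (Finset.card_le_card (Finset.filter_subset_filter _ h))
    (Finset.card_le_card (Finset.filter_subset_filter _ h))

lemma edgeCount_insert (hsmall : IsSmall v) (z w : ZMod p) (J : Finset (ZMod p)) :
    edgeCount v z (insert w J) ≤ edgeCount v z J + 1 := by
  classical
  unfold edgeCount
  have hnot : ¬ (v (w - z) = 1 ∧ v (z - w) = 1) := by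
    rintro ⟨h1, h2⟩
    apply hsmall
    refine ⟨w - z, h1, ?_⟩
    have : -(w - z) = z - w := by ring
    rw [this]
    exact h2
  rw [Finset.filter_insert, Finset.filter_insert]
  by_cases h1 : v (w - z) = 1
  · rw [if_pos h1, if_neg (fun h2 => hnot ⟨h1, h2⟩)]
    have := Finset.card_insert_le w (J.filter fun x => v (x - z) = 1)
    omega
  · rw [if_neg h1]
    by_cases h2 : v (z - w) = 1
    · rw [if_pos h2]
      have := Finset.card_insert_le w (J.filter fun x => v (z - x) = 1)
      omega
    · rw [if_neg h2]
      omega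

lemma zero_edge (hp2 : Nat.Prime p) (hwork : WorkTogether2 v (ehat p)) (h0 : v 0 = 0)
    (hsmall : IsSmall v) (hg : 0 < girth v) (hgev : Even (girth v))
    (c : Fin (girth v) → ZMod p) (hinj : Function.Injective c)
    (hcyc : ∀ t, v (c (finRotate (girth v) t) - c t) = 1)
    (z : ZMod p) (hz : z ∉ Finset.univ.image c)
    (hzero : edgeCount v z (Finset.univ.image c) = 0) : False := by
  classical
  set S : ℕ → Finset (ZMod p) := fun n => Finset.univ.image (em v c hg n) with hSdef
  have hS0 : S 0 = Finset.univ.image c := by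
    rw [hSdef]
    exact Finset.image_congr (fun t _ => em_zero t)
  have hd : cf v c hg 1 - cf v c hg 0 ≠ 0 := by
    intro h
    have := cf_arc c hg hcyc 0
    rw [show (0:ℕ)+1 = 1 from rfl] at this
    rw [h, h0] at this
    exact absurd this (by decide)
  have hex : ∃ n, 1 ≤ edgeCount v z (S n) ∨ z ∈ S n := by
    obtain ⟨R, hR⟩ := em_hit hp2 z hd
    exact ⟨R * girth v, Or.inr (by
      rw [hSdef]
      exact Finset.mem_image.mpr ⟨⟨0, hg⟩, Finset.mem_univ _, hR⟩)⟩
  set N := Nat.find hex with hNdef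
  have hNspec := Nat.find_spec hex
  have hN0 : N ≠ 0 := by
    intro h
    rw [← hNdef, h, hS0] at hNspec
    rcases hNspec with h1 | h1
    · omega
    · exact hz h1
  obtain ⟨n, hn⟩ : ∃ n, N = n + 1 := ⟨N - 1, by omega⟩
  have hnotR : ¬ (1 ≤ edgeCount v z (S n) ∨ z ∈ S n) := by
    apply Nat.find_min hex
    omega
  push_neg at hnotR
  obtain ⟨hEn, hzn⟩ := hnotR
  have hEn0 : edgeCount v z (S n) = 0 := by omega
  obtain ⟨w, hw⟩ := em_adj (v := v) (c := c) (hg := hg) n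
  have hwS : S (n + 1) ⊆ insert w (S n) := hw
  -- z is not on the next cycle
  have hzn1 : z ∉ S (n + 1) := by
    intro hzmem
    obtain ⟨m₀, _, hm₀⟩ := Finset.mem_image.mp hzmem
    have harc : v (em v c hg (n+1) (finRotate (girth v) m₀) - z) = 1 := by
      have := em_arc (hg := hg) hcyc (n + 1) m₀
      rw [hm₀] at this
      exact this
    set q := em v c hg (n+1) (finRotate (girth v) m₀) with hq
    have hqz : q ≠ z := by
      intro h
      rw [h, sub_self, h0] at harc
      exact absurd harc (by decide)
    have hqS : q ∈ insert w (S n) :=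
      hwS (Finset.mem_image.mpr ⟨finRotate (girth v) m₀, Finset.mem_univ _, rfl⟩)
    have hzw : z = w := by
      have : z ∈ insert w (S n) := hwS hzmem
      rcases Finset.mem_insert.mp this with h | h
      · exact h
      · exact absurd h hzn
    have hqSn : q ∈ S n := by
      rcases Finset.mem_insert.mp hqS with h | h
      · exact absurd (h.trans hzw.symm) hqz
      · exact h
    have : 1 ≤ edgeCount v z (S n) := by
      unfold edgeCount
      have : q ∈ (S n).filter fun x => v (x - z) = 1 :=
        Finset.mem_filter.mpr ⟨hqSn, harc⟩
      have := Finset.card_pos.mpr ⟨q, this⟩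
      omega
    omega
  have hR1 : 1 ≤ edgeCount v z (S (n+1)) ∨ z ∈ S (n+1) := by
    rw [← hn]
    exact hNspec
  have hE1 : edgeCount v z (S (n+1)) = 1 := by
    rcases hR1 with h | h
    · have h2 : edgeCount v z (S (n+1)) ≤ edgeCount v z (insert w (S n)) :=
        edgeCount_mono z hwS
      have h3 := edgeCount_insert hsmall z w (S n)
      omega
    · exact absurd h hzn1
  exact one_edge hwork h0 hg hgev (em v c hg (n+1)) (em_inj (hg := hg) hcyc (n+1))
    (em_arc (hg := hg) hcyc (n+1)) z hzn1 hE1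

end Walk

end Cycle

end TwoEdges

/-- Standing assumptions: `p` an odd prime, `v ∈ 𝔽₂ᵖ` a nonzero small vector with `v 0 = 0`
working together with `ê`, and `k` the girth of `v`. Let `C ⊆ ℤ/pℤ` be the vertex set of a
directed cycle of length `k` in `G_v`, i.e. `C = {c 0, …, c (k-1)}` with the `c t` distinct
and `v (c (t+1) - c t) = 1` for every `t` (cyclically). Then for any `i ∉ C`, the number of
`j ∈ C` with `v (j - i) = 1` plus the number of `j ∈ C` with `v (i - j) = 1` is at least
`2`; i.e. there are at least two edges of `G_v` between `i` and `C`, ignoring direction. -/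
theorem at_least_two_edges_to_cycle (p : ℕ) [NeZero p] (hp : p.Prime) (hodd : Odd p)
    (v : ZMod p → ZMod 2) (hv : v ≠ 0) (hsmall : IsSmall v) (h0 : v 0 = 0)
    (hwork : WorkTogether2 v (ehat p))
    (c : Fin (girth v) → ZMod p) (hinj : Function.Injective c)
    (hcyc : ∀ t : Fin (girth v), v (c (finRotate (girth v) t) - c t) = 1)
    (i : ZMod p) (hi : i ∉ Finset.univ.image c) :
    2 ≤ ((Finset.univ.image c).filter (fun j => v (j - i) = 1)).card +
        ((Finset.univ.image c).filter (fun j => v (i - j) = 1)).card := by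
  classical
  have hg : 0 < girth v := TwoEdges.girth_pos hv
  have hgev : Even (girth v) := TwoEdges.girth_even hwork h0 hg c hinj hcyc
  by_contra hcon
  push_neg at hcon
  have hle : TwoEdges.edgeCount v i (Finset.univ.image c) ≤ 1 := by
    unfold TwoEdges.edgeCount
    omega
  rcases Nat.lt_or_ge (TwoEdges.edgeCount v i (Finset.univ.image c)) 1 with h | h
  · exact TwoEdges.zero_edge hp hwork h0 hsmall hg hgev c hinj hcyc i hi (by omega)
  · exact TwoEdges.one_edge hwork h0 hg hgev c hinj hcyc i hi (by omega)
end

section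
/- Let p be a prime and let q be a power of p. Then for all n ∈ ℕ, h_q(pn) ≤ p·h_q(n). -/
/-- The cyclic shift operator on `Fⁿ` (indexed by `ZMod n`): `(cshiftF x) i = x (i - 1)`. -/
def cshiftF {n : ℕ} {F : Type*} (x : ZMod n → F) : ZMod n → F := fun i => x (i - 1)

/-- A subspace `U ≤ Fⁿ` is cyclically covering if every vector of `Fⁿ` has a cyclic shift
lying in `U`, i.e. `⋃ᵢ σⁱ(U) = Fⁿ`. -/
def CyclicallyCoveringF {n : ℕ} {F : Type*} [Field F]
    (U : Submodule F (ZMod n → F)) : Prop :=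
  ∀ x : ZMod n → F, ∃ k : ℕ, cshiftF^[k] x ∈ U

/-- `hF F n` is the largest possible codimension of a cyclically covering subspace of `Fⁿ`. -/
noncomputable def hF (F : Type*) [Field F] (n : ℕ) : ℕ :=
  sSup {d : ℕ | ∃ U : Submodule F (ZMod n → F),
    CyclicallyCoveringF U ∧
    Module.finrank F (ZMod n → F) - Module.finrank F U = d}

def shiftL (F : Type*) [Field F] (m : ℕ) : (ZMod m → F) →ₗ[F] (ZMod m → F) where
  toFun x := cshiftF x
  map_add' _ _ := rfl
  map_smul' _ _ := rfl

lemma shiftL_pow_apply (F : Type*) [Field F] (m : ℕ) (k : ℕ) (x : ZMod m → F) (i : ZMod m) :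
    ((shiftL F m) ^ k) x i = x (i - (k : ZMod m)) := by
  induction k generalizing x i with
  | zero => simp
  | succ k ih =>
      have h : ((shiftL F m) ^ (k+1)) x = ((shiftL F m) ^ k) (shiftL F m x) := by
        rw [pow_succ]; rfl
      rw [h, ih]
      show x (i - (k:ZMod m) - 1) = x (i - ((k+1 : ℕ) : ZMod m))
      congr 1
      push_cast
      ring

lemma shiftL_iterate (F : Type*) [Field F] (m : ℕ) (k : ℕ) (x : ZMod m → F) :
    cshiftF^[k] x = ((shiftL F m) ^ k) x := by
  rw [Module.End.pow_apply]; rfl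

-- rank-nullity for restriction
lemma finrank_map_add_inf_ker (F : Type*) [Field F] {V : Type*} [AddCommGroup V] [Module F V]
    [FiniteDimensional F V] (f : V →ₗ[F] V) (W : Submodule F V) :
    Module.finrank F (W.map f) + Module.finrank F (W ⊓ LinearMap.ker f : Submodule F V)
      = Module.finrank F W := by
  have h := LinearMap.finrank_range_add_finrank_ker (f.domRestrict W)
  rw [LinearMap.range_domRestrict] at h
  have hker : LinearMap.ker (f.domRestrict W)
      = Submodule.comap W.subtype (W ⊓ LinearMap.ker f) := by
    ext x
    simp [LinearMap.mem_ker, Submodule.mem_comap, x.2]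
  rw [hker] at h
  rwa [LinearEquiv.finrank_eq (Submodule.comapSubtypeEquivOfLe (inf_le_left : W ⊓ LinearMap.ker f ≤ W))] at h

open Module LinearMap Submodule Finset in
lemma hF_key (F : Type) [Field F] [Fintype F] (p : ℕ) (hp : p.Prime) [CharP F p]
    (n : ℕ) (hn : 0 < n) : hF F (p * n) ≤ p * hF F n := by
  haveI : Fact p.Prime := ⟨hp⟩
  haveI : NeZero n := ⟨hn.ne'⟩
  have hNpos : 0 < p * n := Nat.mul_pos hp.pos hn
  haveI : NeZero (p * n) := ⟨hNpos.ne'⟩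
  set N := p * n with hNdef
  set σ : (ZMod N → F) →ₗ[F] (ZMod N → F) := shiftL F N with hσdef
  set τ : (ZMod n → F) →ₗ[F] (ZMod n → F) := shiftL F n with hτdef
  set T : (ZMod N → F) →ₗ[F] (ZMod N → F) := σ ^ n - 1 with hTdef
  have hdvd : n ∣ N := dvd_mul_left n p
  set ρ : (ZMod n → F) →ₗ[F] (ZMod N → F) :=
    { toFun := fun x i => x (ZMod.castHom hdvd (ZMod n) i),
      map_add' := fun _ _ => rfl, map_smul' := fun _ _ => rfl } with hρdef
  have hTapp : ∀ (y : ZMod N → F), T y = (σ ^ n) y - y := by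
    intro y; rw [hTdef]; rfl
  -- intertwining
  have hinter : ∀ (k : ℕ) (x : ZMod n → F), (σ ^ k) (ρ x) = ρ ((τ ^ k) x) := by
    intro k x
    funext i
    rw [hσdef, shiftL_pow_apply]
    show x (ZMod.castHom hdvd (ZMod n) (i - (k : ZMod N)))
      = (τ ^ k) x (ZMod.castHom hdvd (ZMod n) i)
    rw [hτdef, shiftL_pow_apply]
    congr 1
    rw [map_sub, map_natCast]
  -- range of ρ is the kernel of T
  have hρinj : Function.Injective ρ := by
    intro a b hab
    funext i
    have h : a (ZMod.castHom hdvd (ZMod n) ((i.val : ℕ) : ZMod N)) =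
        b (ZMod.castHom hdvd (ZMod n) ((i.val : ℕ) : ZMod N)) :=
      congrFun hab ((i.val : ℕ) : ZMod N)
    rwa [map_natCast, ZMod.natCast_rightInverse i] at h
  have hker_range : LinearMap.range ρ = LinearMap.ker T := by
    apply le_antisymm
    · rintro _ ⟨x, rfl⟩
      rw [LinearMap.mem_ker, hTapp, hinter, sub_eq_zero]
      congr 1
      funext i
      rw [hτdef, shiftL_pow_apply]
      simp
    · intro y hy
      rw [LinearMap.mem_ker, hTapp, sub_eq_zero] at hy
      have hper : ∀ a : ZMod N, y (a + (n : ZMod N)) = y a := by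
        intro a
        conv_lhs => rw [← hy, hσdef, shiftL_pow_apply]
        simp
      have hper' : ∀ (t : ℕ) (a : ZMod N), y (a + ((n * t : ℕ) : ZMod N)) = y a := by
        intro t
        induction t with
        | zero => simp
        | succ t ih =>
          intro a
          have harg : a + ((n * (t+1) : ℕ) : ZMod N)
              = (a + (n : ZMod N)) + ((n * t : ℕ) : ZMod N) := by push_cast; ring
          rw [harg, ih, hper]
      refine ⟨fun i => y ((i.val : ℕ) : ZMod N), ?_⟩
      funext i
      show y (((ZMod.castHom hdvd (ZMod n) i).val : ℕ) : ZMod N) = y i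
      have h1 : ZMod.castHom hdvd (ZMod n) i = ((i.val : ℕ) : ZMod n) := by
        conv_lhs => rw [← ZMod.natCast_rightInverse i]
        rw [map_natCast]
      rw [h1, ZMod.val_natCast]
      calc y ((i.val % n : ℕ) : ZMod N)
          = y (((i.val % n : ℕ) : ZMod N) + ((n * (i.val / n) : ℕ) : ZMod N)) :=
            (hper' _ _).symm
        _ = y ((i.val : ℕ) : ZMod N) := by
            rw [← Nat.cast_add, Nat.mod_add_div]
        _ = y i := by rw [ZMod.natCast_rightInverse i]
  -- ranks of the ambient spaces
  have hn_rank : Module.finrank F (ZMod n → F) = n := by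
    rw [Module.finrank_pi, ZMod.card]
  have hN_rank : Module.finrank F (ZMod N → F) = N := by
    rw [Module.finrank_pi, ZMod.card]
  have hkerT_rank : Module.finrank F (LinearMap.ker T) = n := by
    rw [← hker_range, ← (LinearEquiv.ofInjective ρ hρinj).finrank_eq, hn_rank]
  -- T ^ p = 0
  have hσN : σ ^ N = 1 := by
    apply LinearMap.ext
    intro x
    funext i
    rw [hσdef, shiftL_pow_apply]
    simp [ZMod.natCast_self]
  have hTp : T ^ p = 0 := by
    have hpoly : ((Polynomial.X : Polynomial F) ^ n - 1) ^ p
        = (Polynomial.X : Polynomial F) ^ N - 1 := by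
      rw [sub_pow_char, one_pow, ← pow_mul, mul_comm n p, hNdef]
    have h2 := congrArg (Polynomial.aeval σ) hpoly
    simp only [map_pow, map_sub, map_one, Polynomial.aeval_X] at h2
    rw [hσN, sub_self] at h2
    rw [hTdef, h2]
  -- kernels are monotone
  have hkerle : ∀ j k : ℕ, j ≤ k → LinearMap.ker (T ^ j) ≤ LinearMap.ker (T ^ k) := by
    intro j k hjk x hx
    rw [LinearMap.mem_ker] at hx ⊢
    obtain ⟨m, rfl⟩ := Nat.exists_eq_add_of_le hjk
    rw [add_comm, pow_add, Module.End.mul_apply, hx, map_zero]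
  -- images land in ker T
  have himg : ∀ (j : ℕ) (W : Submodule F (ZMod N → F)), W ≤ LinearMap.ker (T ^ (j+1)) →
      W.map (T ^ j) ≤ LinearMap.ker T := by
    rintro j W hW _ ⟨y, hy, rfl⟩
    rw [LinearMap.mem_ker, ← Module.End.mul_apply, ← pow_succ']
    exact hW hy
  -- telescoping sum
  have htel : ∀ (U' : Submodule F (ZMod N → F)) (m : ℕ),
      ∑ j ∈ Finset.range m,
        Module.finrank F ((U' ⊓ LinearMap.ker (T ^ (j+1))).map (T ^ j))
      = Module.finrank F (U' ⊓ LinearMap.ker (T ^ m) : Submodule F (ZMod N → F)) := by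
    intro U' m
    induction m with
    | zero =>
      rw [Finset.sum_range_zero, pow_zero, Module.End.one_eq_id, LinearMap.ker_id,
        inf_bot_eq]
      exact (finrank_bot F _).symm
    | succ m ih =>
      rw [Finset.sum_range_succ, ih]
      have h := finrank_map_add_inf_ker F (T ^ m) (U' ⊓ LinearMap.ker (T ^ (m+1)))
      have h2 : (U' ⊓ LinearMap.ker (T ^ (m+1))) ⊓ LinearMap.ker (T ^ m)
          = U' ⊓ LinearMap.ker (T ^ m) := by
        rw [inf_assoc, inf_eq_right.2 (hkerle m (m+1) (Nat.le_succ m))]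
      rw [h2] at h
      omega
  -- surjectivity of T^j : ker T^{j+1} → ker T
  have hcomm : ∀ k m : ℕ, Commute (σ ^ k) (T ^ m) := by
    intro k m
    exact (((Commute.pow_pow_self σ k n).sub_right (Commute.one_right _)).pow_right m)
  have hfj_le : ∀ j : ℕ,
      Module.finrank F ((LinearMap.ker (T ^ (j+1))).map (T ^ j)) ≤ n := by
    intro j
    rw [← hkerT_rank]
    exact Submodule.finrank_mono (himg j _ le_rfl)
  have hsum_top : ∑ j ∈ Finset.range p,
      Module.finrank F ((LinearMap.ker (T ^ (j+1))).map (T ^ j)) = p * n := by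
    calc ∑ j ∈ Finset.range p,
        Module.finrank F ((LinearMap.ker (T ^ (j+1))).map (T ^ j))
        = ∑ j ∈ Finset.range p,
            Module.finrank F ((((⊤ : Submodule F (ZMod N → F)) ⊓ LinearMap.ker (T ^ (j+1))).map (T ^ j) : Submodule F (ZMod N → F))) :=
          Finset.sum_congr rfl (fun i _ => by rw [top_inf_eq])
      _ = Module.finrank F ↥((⊤ : Submodule F (ZMod N → F)) ⊓ LinearMap.ker (T ^ p)) :=
          htel ⊤ p
      _ = p * n := by rw [hTp, LinearMap.ker_zero, top_inf_eq, finrank_top, hN_rank]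
  have hfull : ∀ j < p, (LinearMap.ker (T ^ (j+1))).map (T ^ j) = LinearMap.ker T := by
    intro j hj
    have htopinf : ∀ i : ℕ, (⊤ : Submodule F (ZMod N → F)) ⊓ LinearMap.ker (T ^ (i+1))
        = LinearMap.ker (T ^ (i+1)) := fun i => top_inf_eq _
    apply Submodule.eq_of_le_of_finrank_eq (himg j _ le_rfl)
    rw [hkerT_rank]
    by_contra hne
    have hlt : Module.finrank F ((LinearMap.ker (T ^ (j+1))).map (T ^ j)) < n :=
      lt_of_le_of_ne (hfj_le j) hne
    have : ∑ i ∈ Finset.range p,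
        Module.finrank F ((LinearMap.ker (T ^ (i+1))).map (T ^ i)) < p * n := by
      calc ∑ i ∈ Finset.range p,
          Module.finrank F ((LinearMap.ker (T ^ (i+1))).map (T ^ i))
          < ∑ _i ∈ Finset.range p, n := by
            apply Finset.sum_lt_sum (fun i _ => hfj_le i)
            exact ⟨j, Finset.mem_range.2 hj, hlt⟩
        _ = p * n := by rw [Finset.sum_const, Finset.card_range, smul_eq_mul]
    omega
  -- main argument
  apply csSup_le'
  rintro d ⟨U, hU, rfl⟩
  set B : ℕ → Submodule F (ZMod n → F) :=
    fun j => Submodule.comap ρ ((U ⊓ LinearMap.ker (T ^ (j+1))).map (T ^ j)) with hBdef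
  have hBrank : ∀ j, Module.finrank F (B j)
      = Module.finrank F ((U ⊓ LinearMap.ker (T ^ (j+1))).map (T ^ j)) := by
    intro j
    have hMle : (U ⊓ LinearMap.ker (T ^ (j+1))).map (T ^ j) ≤ LinearMap.range ρ := by
      rw [hker_range]
      exact himg j _ inf_le_right
    have h1 : Submodule.map ρ (B j) = (U ⊓ LinearMap.ker (T ^ (j+1))).map (T ^ j) := by
      rw [hBdef, Submodule.map_comap_eq, inf_eq_right.2 hMle]
    rw [LinearEquiv.finrank_eq (Submodule.equivMapOfInjective ρ hρinj (B j)), h1]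
  have hBcov : ∀ j < p, CyclicallyCoveringF (B j) := by
    intro j hj x
    have hx : ρ x ∈ (LinearMap.ker (T ^ (j+1))).map (T ^ j) := by
      rw [hfull j hj, ← hker_range]
      exact LinearMap.mem_range_self ρ x
    obtain ⟨y, hy, hTy⟩ := hx
    obtain ⟨k, hk⟩ := hU y
    rw [shiftL_iterate, ← hσdef] at hk
    refine ⟨k, ?_⟩
    rw [shiftL_iterate, ← hτdef]
    have hswap : ∀ m : ℕ, (T ^ m) ((σ ^ k) y) = (σ ^ k) ((T ^ m) y) := by
      intro m
      have := congrFun (congrArg DFunLike.coe ((hcomm k m).eq)) y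
      simpa [Module.End.mul_apply] using this.symm
    have hy' : (T ^ (j+1)) y = 0 := hy
    refine Submodule.mem_comap.2 ⟨(σ ^ k) y, ⟨hk, ?_⟩, ?_⟩
    · show (T ^ (j+1)) ((σ ^ k) y) = 0
      rw [hswap (j+1), hy', map_zero]
    · rw [hswap j, hTy, hinter]
  -- conclusion
  have hS_bdd : BddAbove {d : ℕ | ∃ U : Submodule F (ZMod n → F),
      CyclicallyCoveringF U ∧
      Module.finrank F (ZMod n → F) - Module.finrank F U = d} := by
    refine ⟨Module.finrank F (ZMod n → F), ?_⟩
    rintro d ⟨U', _, rfl⟩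
    exact Nat.sub_le _ _
  have hBle : ∀ j < p, n ≤ Module.finrank F (B j) + hF F n := by
    intro j hj
    have hmem : Module.finrank F (ZMod n → F) - Module.finrank F (B j) ∈
        {d : ℕ | ∃ U : Submodule F (ZMod n → F),
          CyclicallyCoveringF U ∧
          Module.finrank F (ZMod n → F) - Module.finrank F U = d} :=
      ⟨B j, hBcov j hj, rfl⟩
    have h : Module.finrank F (ZMod n → F) - Module.finrank F (B j) ≤ hF F n :=
      le_csSup hS_bdd hmem
    have hle : Module.finrank F (B j) ≤ Module.finrank F (ZMod n → F) :=
      Submodule.finrank_le (B j)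
    omega
  have hsumU : ∑ j ∈ Finset.range p, Module.finrank F (B j) = Module.finrank F U := by
    have h := htel U p
    have : LinearMap.ker (T ^ p) = ⊤ := by rw [hTp, LinearMap.ker_zero]
    rw [this, inf_top_eq] at h
    calc ∑ j ∈ Finset.range p, Module.finrank F (B j)
        = ∑ j ∈ Finset.range p,
            Module.finrank F ((U ⊓ LinearMap.ker (T ^ (j+1))).map (T ^ j)) :=
          Finset.sum_congr rfl (fun j _ => hBrank j)
      _ = Module.finrank F U := h
  have hfinal : p * n ≤ Module.finrank F U + p * hF F n := by
    calc p * n = ∑ _j ∈ Finset.range p, n := by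
          rw [Finset.sum_const, Finset.card_range, smul_eq_mul]
      _ ≤ ∑ j ∈ Finset.range p, (Module.finrank F (B j) + hF F n) :=
          Finset.sum_le_sum (fun j hj => hBle j (Finset.mem_range.1 hj))
      _ = (∑ j ∈ Finset.range p, Module.finrank F (B j)) + p * hF F n := by
          rw [Finset.sum_add_distrib, Finset.sum_const, Finset.card_range, smul_eq_mul]
      _ = Module.finrank F U + p * hF F n := by rw [hsumU]
  rw [hN_rank]
  omega

/-- Let `p` be a prime and let `q` be a power of `p` (so `𝔽_q` is a finite field `F` of
cardinality `q = p^e`). Then for all `n ∈ ℕ`, `h_q(pn) ≤ p·h_q(n)`. -/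
theorem hF_p_mul_le (p : ℕ) (hp : p.Prime) (F : Type) [Field F] [Fintype F]
    (e : ℕ) (he : 0 < e) (hcard : Fintype.card F = p ^ e) (n : ℕ) :
    hF F (p * n) ≤ p * hF F n := by
  rcases Nat.eq_zero_or_pos n with rfl | hn
  · rw [mul_zero]
    exact Nat.le_mul_of_pos_left _ hp.pos
  · obtain ⟨m, hrp, hcard'⟩ := FiniteField.card F (ringChar F)
    have hpr : p = ringChar F := by
      have h1 : p ∣ ringChar F ^ (m : ℕ) := by
        rw [← hcard', hcard]
        exact dvd_pow_self p he.ne'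
      exact (Nat.prime_dvd_prime_iff_eq hp hrp).1 (hp.dvd_of_dvd_pow h1)
    haveI : CharP F p := hpr ▸ ringChar.charP F
    exact hF_key F p hp n hn
end
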